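/- arXiv:1608.08287 — 14 statements merged into one kernel-verified Lean document; each statement's English description precedes it below -/
import Mathlib

section
/- Let {,} be an H0-Poisson structure on A. Then {,} descends to the quotient vector space A/[A,A]: {a,b} = 0 whenever a ∈ [A,A], and {a,b} ∈ [A,A] whenever b ∈ [A,A]; consequently there is a unique ℂ-bilinear bracket ⌊·,·⌋ on A/[A,A] with ⌊a + [A,A], b + [A,A]⌋ = {a,b} + [A,A], and this bracket makes A/[A,A] into a Lie algebra over ℂ (it is skew-symmetric and satisfies the Jacobi identity). -/
/-- An `H₀`-Poisson structure on `A` descends to the quotient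
`A/[A,A]` and induces a Lie algebra structure there. -/
theorem stmt1 {A : Type*} [Ring A] [Algebra ℂ A]
    (P : A →ₗ[ℂ] A →ₗ[ℂ] A)
    (hDer : ∀ a b c : A, P a (b * c) = b * P a c + P a b * c)
    (hCyc : ∀ a b c : A, P (a * b) c = P (b * a) c)
    (hJac : ∀ a b c : A, P a (P b c) - P b (P a c) = P (P a b) c)
    (hSkew : ∀ a b : A, P a b + P b a ∈
      Submodule.span ℂ {z : A | ∃ x y : A, z = x * y - y * x}) :
    letI K : Submodule ℂ A := Submodule.span ℂ {z : A | ∃ x y : A, z = x * y - y * x}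
    (∀ a ∈ K, ∀ b : A, P a b = 0) ∧
    (∀ a : A, ∀ b ∈ K, P a b ∈ K) ∧
    (∃! L : (A ⧸ K) →ₗ[ℂ] (A ⧸ K) →ₗ[ℂ] (A ⧸ K),
      ∀ a b : A, L (Submodule.Quotient.mk a) (Submodule.Quotient.mk b) =
        Submodule.Quotient.mk (P a b)) ∧
    (∀ L : (A ⧸ K) →ₗ[ℂ] (A ⧸ K) →ₗ[ℂ] (A ⧸ K),
      (∀ a b : A, L (Submodule.Quotient.mk a) (Submodule.Quotient.mk b) =
        Submodule.Quotient.mk (P a b)) →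
      (∀ x y : A ⧸ K, L x y = - L y x) ∧
      (∀ x y z : A ⧸ K, L x (L y z) - L y (L x z) = L (L x y) z)) := by
  set K : Submodule ℂ A := Submodule.span ℂ {z : A | ∃ x y : A, z = x * y - y * x} with hK
  have hzero : ∀ a ∈ K, ∀ b : A, P a b = 0 := by
    intro a ha b
    induction ha using Submodule.span_induction with
    | mem z hz =>
      obtain ⟨x, y, rfl⟩ := hz
      have : P (x * y - y * x) = P (x * y) - P (y * x) := map_sub P _ _
      rw [this]
      simp [hCyc x y b]
    | zero => simp
    | add u v hu hv ihu ihv =>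
      rw [map_add P]; simp [ihu, ihv]
    | smul c u hu ihu =>
      rw [map_smul P]; simp [ihu]
  have hmem : ∀ a : A, ∀ b ∈ K, P a b ∈ K := by
    intro a b hb
    induction hb using Submodule.span_induction with
    | mem z hz =>
      obtain ⟨x, y, rfl⟩ := hz
      rw [map_sub (P a), hDer a x y, hDer a y x]
      have h1 : x * P a y - P a y * x ∈ K :=
        Submodule.subset_span ⟨x, P a y, rfl⟩
      have h2 : P a x * y - y * P a x ∈ K :=
        Submodule.subset_span ⟨P a x, y, rfl⟩
      have : x * P a y + P a x * y - (y * P a x + P a y * x) =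
          (x * P a y - P a y * x) + (P a x * y - y * P a x) := by abel
      rw [this]
      exact K.add_mem h1 h2
    | zero => simp
    | add u v hu hv ihu ihv =>
      rw [map_add (P a)]; exact K.add_mem ihu ihv
    | smul c u hu ihu =>
      rw [map_smul (P a)]; exact K.smul_mem c ihu
  -- the descended map in the second variable
  have hQker : ∀ a : A, K ≤ LinearMap.ker (K.mkQ ∘ₗ P a) := by
    intro a b hb
    simp only [LinearMap.mem_ker, LinearMap.comp_apply, Submodule.mkQ_apply,
      Submodule.Quotient.mk_eq_zero]
    exact hmem a b hb
  let Q : A →ₗ[ℂ] (A ⧸ K) →ₗ[ℂ] (A ⧸ K) :=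
    { toFun := fun a => K.liftQ (K.mkQ ∘ₗ P a) (hQker a)
      map_add' := by
        intro a b
        apply LinearMap.ext
        intro x
        obtain ⟨c, rfl⟩ := Submodule.Quotient.mk_surjective K x
        simp [Submodule.liftQ_apply]
      map_smul' := by
        intro c a
        apply LinearMap.ext
        intro x
        obtain ⟨d, rfl⟩ := Submodule.Quotient.mk_surjective K x
        simp [Submodule.liftQ_apply] }
  have hQker2 : K ≤ LinearMap.ker Q := by
    intro a ha
    simp only [LinearMap.mem_ker]
    apply LinearMap.ext
    intro x
    obtain ⟨c, rfl⟩ := Submodule.Quotient.mk_surjective K x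
    simp [Q, Submodule.liftQ_apply, hzero a ha c]
  let L₀ : (A ⧸ K) →ₗ[ℂ] (A ⧸ K) →ₗ[ℂ] (A ⧸ K) := K.liftQ Q hQker2
  have hL₀ : ∀ a b : A, L₀ (Submodule.Quotient.mk a) (Submodule.Quotient.mk b) =
      Submodule.Quotient.mk (P a b) := by
    intro a b
    simp [L₀, Q, Submodule.liftQ_apply]
  refine ⟨hzero, hmem, ⟨L₀, hL₀, ?_⟩, ?_⟩
  · intro L hL
    apply LinearMap.ext
    intro x
    obtain ⟨a, rfl⟩ := Submodule.Quotient.mk_surjective K x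
    apply LinearMap.ext
    intro y
    obtain ⟨b, rfl⟩ := Submodule.Quotient.mk_surjective K y
    rw [hL a b, hL₀ a b]
  · intro L hL
    constructor
    · intro x y
      obtain ⟨a, rfl⟩ := Submodule.Quotient.mk_surjective K x
      obtain ⟨b, rfl⟩ := Submodule.Quotient.mk_surjective K y
      rw [hL a b, hL b a, eq_neg_iff_add_eq_zero, ← Submodule.Quotient.mk_add,
        Submodule.Quotient.mk_eq_zero]
      exact hSkew a b
    · intro x y z
      obtain ⟨a, rfl⟩ := Submodule.Quotient.mk_surjective K x
      obtain ⟨b, rfl⟩ := Submodule.Quotient.mk_surjective K y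
      obtain ⟨c, rfl⟩ := Submodule.Quotient.mk_surjective K z
      rw [hL b c, hL a c, hL a b, hL a (P b c), hL b (P a c), hL (P a b) c,
        ← Submodule.Quotient.mk_sub, hJac a b c]
end

section
/- For all x,y,z ∈ A and all indices i,j,k,m ∈ {1,…,N}: Φ_{kj,im}(x, yz) = Σ_{l=1}^{N} φ(y)_{kl}·Φ_{lj,im}(x,z) + Σ_{l=1}^{N} Φ_{kj,il}(x,y)·φ(z)_{lm}, and Φ_{kj,im}(xy, z) = Σ_{l=1}^{N} φ(x)_{il}·Φ_{kj,lm}(y,z) + Σ_{l=1}^{N} φ(y)_{lj}·Φ_{kl,im}(x,z). In particular, the assignment (φ(x)_{ij}, φ(y)_{kl}) ↦ Φ_{kj,il}(x,y) is compatible with the Leibniz rules in both arguments. -/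
open TensorProduct

/-- The matrix-entry pairing `Φ` of a double bracket satisfies the
Leibniz rules in both arguments with respect to matrix entries. -/
theorem stmt2 {A B : Type*} [Ring A] [Algebra ℂ A] [CommRing B] [Algebra ℂ B]
    (N : ℕ) (hN : 0 < N)
    (φ : A →ₐ[ℂ] Matrix (Fin N) (Fin N) B)
    (db : A ⊗[ℂ] A →ₗ[ℂ] A ⊗[ℂ] A)
    (hLeibR : ∀ a b c : A, db (a ⊗ₜ[ℂ] (b * c)) =
      (b ⊗ₜ[ℂ] (1 : A)) * db (a ⊗ₜ[ℂ] c) + db (a ⊗ₜ[ℂ] b) * ((1 : A) ⊗ₜ[ℂ] c))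
    (hLeibL : ∀ a b c : A, db ((a * b) ⊗ₜ[ℂ] c) =
      ((1 : A) ⊗ₜ[ℂ] a) * db (b ⊗ₜ[ℂ] c) + db (a ⊗ₜ[ℂ] c) * (b ⊗ₜ[ℂ] (1 : A)))
    (Φ : Fin N → Fin N → Fin N → Fin N → (A ⊗[ℂ] A →ₗ[ℂ] B))
    (hΦ : ∀ (k j i l : Fin N) (s t : A),
      Φ k j i l (s ⊗ₜ[ℂ] t) = φ s k j * φ t i l) :
    (∀ (x y z : A) (i j k m : Fin N),
      Φ k j i m (db (x ⊗ₜ[ℂ] (y * z))) =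
        (∑ l, φ y k l * Φ l j i m (db (x ⊗ₜ[ℂ] z))) +
        (∑ l, Φ k j i l (db (x ⊗ₜ[ℂ] y)) * φ z l m)) ∧
    (∀ (x y z : A) (i j k m : Fin N),
      Φ k j i m (db ((x * y) ⊗ₜ[ℂ] z)) =
        (∑ l, φ x i l * Φ k j l m (db (y ⊗ₜ[ℂ] z))) +
        (∑ l, φ y l j * Φ k l i m (db (x ⊗ₜ[ℂ] z)))) := by
  have H1 : ∀ (b : A) (w : A ⊗[ℂ] A) (i j k m : Fin N),
      Φ k j i m ((b ⊗ₜ[ℂ] (1:A)) * w) = ∑ l, φ b k l * Φ l j i m w := by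
    intro b w i j k m
    induction w using TensorProduct.induction_on with
    | zero => simp
    | tmul s t =>
      rw [Algebra.TensorProduct.tmul_mul_tmul, one_mul, hΦ, map_mul,
        Matrix.mul_apply, Finset.sum_mul]
      exact Finset.sum_congr rfl (fun l _ => by rw [hΦ]; ring)
    | add u v hu hv =>
      simp only [mul_add, map_add, hu, hv, mul_add, ← Finset.sum_add_distrib]
  have H2 : ∀ (c : A) (w : A ⊗[ℂ] A) (i j k m : Fin N),
      Φ k j i m (w * ((1:A) ⊗ₜ[ℂ] c)) = ∑ l, Φ k j i l w * φ c l m := by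
    intro c w i j k m
    induction w using TensorProduct.induction_on with
    | zero => simp
    | tmul s t =>
      rw [Algebra.TensorProduct.tmul_mul_tmul, mul_one, hΦ, map_mul,
        Matrix.mul_apply, Finset.mul_sum]
      exact Finset.sum_congr rfl (fun l _ => by rw [hΦ]; ring)
    | add u v hu hv =>
      simp only [add_mul, map_add, hu, hv, add_mul, ← Finset.sum_add_distrib]
  have H3 : ∀ (a : A) (w : A ⊗[ℂ] A) (i j k m : Fin N),
      Φ k j i m (((1:A) ⊗ₜ[ℂ] a) * w) = ∑ l, φ a i l * Φ k j l m w := by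
    intro a w i j k m
    induction w using TensorProduct.induction_on with
    | zero => simp
    | tmul s t =>
      rw [Algebra.TensorProduct.tmul_mul_tmul, one_mul, hΦ, map_mul,
        Matrix.mul_apply, Finset.mul_sum]
      exact Finset.sum_congr rfl (fun l _ => by rw [hΦ]; ring)
    | add u v hu hv =>
      simp only [mul_add, map_add, hu, hv, mul_add, ← Finset.sum_add_distrib]
  have H4 : ∀ (b : A) (w : A ⊗[ℂ] A) (i j k m : Fin N),
      Φ k j i m (w * (b ⊗ₜ[ℂ] (1:A))) = ∑ l, φ b l j * Φ k l i m w := by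
    intro b w i j k m
    induction w using TensorProduct.induction_on with
    | zero => simp
    | tmul s t =>
      rw [Algebra.TensorProduct.tmul_mul_tmul, mul_one, hΦ, map_mul,
        Matrix.mul_apply, Finset.sum_mul]
      exact Finset.sum_congr rfl (fun l _ => by rw [hΦ]; ring)
    | add u v hu hv =>
      simp only [add_mul, map_add, hu, hv, mul_add, ← Finset.sum_add_distrib]
  constructor
  · intro x y z i j k m
    rw [hLeibR, map_add, H1, H2]
  · intro x y z i j k m
    rw [hLeibL, map_add, H3, H4]
end

section
/- For all x,y ∈ A and all indices k,l ∈ {1,…,N}: P(Tr(φ(x)), φ(y)_{kl}) = φ({x,y})_{kl}, where {x,y} = μ(db(x ⊗ y)). Equivalently, Σ_{i=1}^{N} Φ_{ki,il}(x,y) = φ(μ(db(x ⊗ y)))_{kl}. -/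
open TensorProduct

/-- `P(Tr(φ(x)), φ(y)_{kl}) = φ({x,y})_{kl}`, where `{x,y} = μ(db(x⊗y))`. -/
theorem stmt3 {A B : Type*} [Ring A] [Algebra ℂ A] [CommRing B] [Algebra ℂ B]
    (N : ℕ) (hN : 0 < N)
    (φ : A →ₐ[ℂ] Matrix (Fin N) (Fin N) B)
    (db : A ⊗[ℂ] A →ₗ[ℂ] A ⊗[ℂ] A)
    (hLeibR : ∀ a b c : A, db (a ⊗ₜ[ℂ] (b * c)) =
      (b ⊗ₜ[ℂ] (1 : A)) * db (a ⊗ₜ[ℂ] c) + db (a ⊗ₜ[ℂ] b) * ((1 : A) ⊗ₜ[ℂ] c))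
    (hLeibL : ∀ a b c : A, db ((a * b) ⊗ₜ[ℂ] c) =
      ((1 : A) ⊗ₜ[ℂ] a) * db (b ⊗ₜ[ℂ] c) + db (a ⊗ₜ[ℂ] c) * (b ⊗ₜ[ℂ] (1 : A)))
    (Φ : Fin N → Fin N → Fin N → Fin N → (A ⊗[ℂ] A →ₗ[ℂ] B))
    (hΦ : ∀ (k j i l : Fin N) (s t : A),
      Φ k j i l (s ⊗ₜ[ℂ] t) = φ s k j * φ t i l)
    (P : B →ₗ[ℂ] B →ₗ[ℂ] B)
    (hPL : ∀ a b c : B, P (a * b) c = a * P b c + b * P a c)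
    (hPR : ∀ a b c : B, P a (b * c) = c * P a b + b * P a c)
    (hPφ : ∀ (x y : A) (i j k l : Fin N),
      P (φ x i j) (φ y k l) = Φ k j i l (db (x ⊗ₜ[ℂ] y))) :
    (∀ (x y : A) (k l : Fin N),
      P (Matrix.trace (φ x)) (φ y k l) =
        φ (LinearMap.mul' ℂ A (db (x ⊗ₜ[ℂ] y))) k l) ∧
    (∀ (x y : A) (k l : Fin N),
      (∑ i, Φ k i i l (db (x ⊗ₜ[ℂ] y))) =
        φ (LinearMap.mul' ℂ A (db (x ⊗ₜ[ℂ] y))) k l) := by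
  have key : ∀ (k l : Fin N) (t : A ⊗[ℂ] A),
      (∑ i, Φ k i i l t) = φ (LinearMap.mul' ℂ A t) k l := by
    intro k l t
    induction t using TensorProduct.induction_on with
    | zero => simp
    | tmul s t =>
        simp only [hΦ, LinearMap.mul'_apply, map_mul, Matrix.mul_apply]
    | add u v hu hv =>
        simp only [map_add, Matrix.add_apply, Finset.sum_add_distrib, hu, hv]
  have part2 : ∀ (x y : A) (k l : Fin N),
      (∑ i, Φ k i i l (db (x ⊗ₜ[ℂ] y))) =
        φ (LinearMap.mul' ℂ A (db (x ⊗ₜ[ℂ] y))) k l := fun x y k l => key k l _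
  refine ⟨fun x y k l => ?_, part2⟩
  rw [Matrix.trace, ← part2 x y k l]
  simp only [Matrix.diag]
  rw [map_sum, LinearMap.coe_sum, Finset.sum_apply]
  exact Finset.sum_congr rfl fun i _ => hPφ x y i i k l
end

section
/- For all f,g ∈ T one has P(f,g) ∈ T and P(f,g) = −P(g,f); that is, the restriction of P to the subalgebra T generated by traces is a skew-symmetric bracket taking values in T. -/
open TensorProduct

/-- The restriction of `P` to the trace subalgebra `T` is a
skew-symmetric bracket taking values in `T`. -/
theorem stmt4 {A B : Type*} [Ring A] [Algebra ℂ A] [CommRing B] [Algebra ℂ B]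
    (N : ℕ) (hN : 0 < N)
    (φ : A →ₐ[ℂ] Matrix (Fin N) (Fin N) B)
    (db : A ⊗[ℂ] A →ₗ[ℂ] A ⊗[ℂ] A)
    (hLeibR : ∀ a b c : A, db (a ⊗ₜ[ℂ] (b * c)) =
      (b ⊗ₜ[ℂ] (1 : A)) * db (a ⊗ₜ[ℂ] c) + db (a ⊗ₜ[ℂ] b) * ((1 : A) ⊗ₜ[ℂ] c))
    (hLeibL : ∀ a b c : A, db ((a * b) ⊗ₜ[ℂ] c) =
      ((1 : A) ⊗ₜ[ℂ] a) * db (b ⊗ₜ[ℂ] c) + db (a ⊗ₜ[ℂ] c) * (b ⊗ₜ[ℂ] (1 : A)))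
    (hJac : ∀ a b c : A,
      LinearMap.mul' ℂ A (db (a ⊗ₜ[ℂ] LinearMap.mul' ℂ A (db (b ⊗ₜ[ℂ] c)))) -
      LinearMap.mul' ℂ A (db (b ⊗ₜ[ℂ] LinearMap.mul' ℂ A (db (a ⊗ₜ[ℂ] c)))) =
      LinearMap.mul' ℂ A (db (LinearMap.mul' ℂ A (db (a ⊗ₜ[ℂ] b)) ⊗ₜ[ℂ] c)))
    (hSkew : ∀ a b : A,
      LinearMap.mul' ℂ A (db (a ⊗ₜ[ℂ] b)) + LinearMap.mul' ℂ A (db (b ⊗ₜ[ℂ] a)) ∈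
      Submodule.span ℂ {z : A | ∃ x y : A, z = x * y - y * x})
    (Φ : Fin N → Fin N → Fin N → Fin N → (A ⊗[ℂ] A →ₗ[ℂ] B))
    (hΦ : ∀ (k j i l : Fin N) (s t : A),
      Φ k j i l (s ⊗ₜ[ℂ] t) = φ s k j * φ t i l)
    (P : B →ₗ[ℂ] B →ₗ[ℂ] B)
    (hPL : ∀ a b c : B, P (a * b) c = a * P b c + b * P a c)
    (hPR : ∀ a b c : B, P a (b * c) = c * P a b + b * P a c)
    (hPφ : ∀ (x y : A) (i j k l : Fin N),
      P (φ x i j) (φ y k l) = Φ k j i l (db (x ⊗ₜ[ℂ] y)))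
    (T : Subalgebra ℂ B)
    (hT : T = Algebra.adjoin ℂ (Set.range fun x : A => Matrix.trace (φ x))) :
    ∀ f ∈ T, ∀ g ∈ T, P f g ∈ T ∧ P f g = - P g f := by
  -- Preliminaries
  have hP1 : ∀ g : B, P 1 g = 0 := by
    intro g
    have h := hPL 1 1 g
    simp only [one_mul] at h
    exact (left_eq_add.mp h)
  have hP1' : ∀ g : B, P g 1 = 0 := by
    intro g
    have h := hPR g 1 1
    simp only [one_mul] at h
    exact (left_eq_add.mp h)
  have hPalg : ∀ (c : ℂ) (g : B), P (algebraMap ℂ B c) g = 0 := by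
    intro c g
    rw [Algebra.algebraMap_eq_smul_one, map_smul, LinearMap.smul_apply, hP1, smul_zero]
  have hPalg' : ∀ (c : ℂ) (g : B), P g (algebraMap ℂ B c) = 0 := by
    intro c g
    rw [Algebra.algebraMap_eq_smul_one, map_smul, hP1', smul_zero]
  set F : A →ₗ[ℂ] B := (Matrix.traceLinearMap (Fin N) ℂ B).comp φ.toLinearMap with hF
  have hFapp : ∀ z : A, F z = Matrix.trace (φ z) := fun z => rfl
  have hFT : ∀ z : A, F z ∈ T := by
    intro z
    rw [hT, hFapp]
    exact Algebra.subset_adjoin ⟨z, rfl⟩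
  have key1 : ∀ x y : A, P (Matrix.trace (φ x)) (Matrix.trace (φ y)) =
      F (LinearMap.mul' ℂ A (db (x ⊗ₜ[ℂ] y))) := by
    intro x y
    have hG : (∑ i : Fin N, ∑ k : Fin N, Φ k i i k) = F.comp (LinearMap.mul' ℂ A) := by
      apply TensorProduct.ext'
      intro s t
      simp only [LinearMap.sum_apply, hΦ, LinearMap.comp_apply, LinearMap.mul'_apply, hFapp,
        map_mul, Matrix.trace, Matrix.diag_apply, Matrix.mul_apply]
      rw [Finset.sum_comm]
    have h2 : P (Matrix.trace (φ x)) (Matrix.trace (φ y)) =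
        (∑ i : Fin N, ∑ k : Fin N, Φ k i i k) (db (x ⊗ₜ[ℂ] y)) := by
      simp only [Matrix.trace, Matrix.diag_apply, map_sum, LinearMap.sum_apply, hPφ]
      rw [Finset.sum_comm]
    rw [h2, hG]
    rfl
  have hFcomm : ∀ z ∈ Submodule.span ℂ {z : A | ∃ x y : A, z = x * y - y * x}, F z = 0 := by
    intro z hz
    induction hz using Submodule.span_induction with
    | mem w hw =>
      obtain ⟨x, y, rfl⟩ := hw
      simp only [hFapp, map_sub, map_mul]
      rw [Matrix.trace_sub, Matrix.trace_mul_comm, sub_self]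
    | zero => exact map_zero F
    | add a b _ _ ha hb => rw [map_add, ha, hb, add_zero]
    | smul c a _ ha => rw [map_smul, ha, smul_zero]
  have key2 : ∀ x y : A, P (Matrix.trace (φ x)) (Matrix.trace (φ y)) =
      - P (Matrix.trace (φ y)) (Matrix.trace (φ x)) := by
    intro x y
    have h := hFcomm _ (hSkew x y)
    rw [map_add] at h
    rw [key1 x y, key1 y x]
    exact eq_neg_of_add_eq_zero_left h
  -- Main double induction
  have main : ∀ f : B, f ∈ T →
      (f ∈ T ∧ ∀ g ∈ T, P f g ∈ T ∧ P f g = - P g f) := by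
    intro f hf
    rw [hT] at hf
    induction hf using Algebra.adjoin_induction with
    | mem w hw =>
      obtain ⟨x, rfl⟩ := hw
      refine ⟨hFT x, ?_⟩
      intro g hg
      rw [hT] at hg
      induction hg using Algebra.adjoin_induction with
      | mem v hv =>
        obtain ⟨y, rfl⟩ := hv
        exact ⟨by rw [key1]; exact hFT _, key2 x y⟩
      | algebraMap c =>
        refine ⟨by rw [hPalg']; exact Subalgebra.zero_mem T, ?_⟩
        rw [hPalg', hPalg, neg_zero]
      | add a b ha hb iha ihb =>
        have haT : a ∈ T := by rw [hT]; exact ha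
        have hbT : b ∈ T := by rw [hT]; exact hb
        obtain ⟨m1, e1⟩ := iha
        obtain ⟨m2, e2⟩ := ihb
        refine ⟨?_, ?_⟩
        · rw [map_add]; exact Subalgebra.add_mem T m1 m2
        · rw [map_add, e1, e2, map_add, LinearMap.add_apply, neg_add]
      | mul a b ha hb iha ihb =>
        have haT : a ∈ T := by rw [hT]; exact ha
        have hbT : b ∈ T := by rw [hT]; exact hb
        obtain ⟨m1, e1⟩ := iha
        obtain ⟨m2, e2⟩ := ihb
        refine ⟨?_, ?_⟩
        · rw [hPR]
          exact Subalgebra.add_mem T (Subalgebra.mul_mem T hbT m1)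
            (Subalgebra.mul_mem T haT m2)
        · rw [hPR, hPL, e1, e2]; ring
    | algebraMap c =>
      refine ⟨Subalgebra.algebraMap_mem T c, ?_⟩
      intro g hg
      refine ⟨by rw [hPalg]; exact Subalgebra.zero_mem T, ?_⟩
      rw [hPalg, hPalg', neg_zero]
    | add a b ha hb iha ihb =>
      obtain ⟨maT, iha⟩ := iha
      obtain ⟨mbT, ihb⟩ := ihb
      refine ⟨Subalgebra.add_mem T maT mbT, ?_⟩
      intro g hg
      obtain ⟨m1, e1⟩ := iha g hg
      obtain ⟨m2, e2⟩ := ihb g hg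
      refine ⟨?_, ?_⟩
      · rw [map_add, LinearMap.add_apply]; exact Subalgebra.add_mem T m1 m2
      · rw [map_add, LinearMap.add_apply, e1, e2, map_add, neg_add]
    | mul a b ha hb iha ihb =>
      obtain ⟨maT, iha⟩ := iha
      obtain ⟨mbT, ihb⟩ := ihb
      refine ⟨Subalgebra.mul_mem T maT mbT, ?_⟩
      intro g hg
      obtain ⟨m1, e1⟩ := iha g hg
      obtain ⟨m2, e2⟩ := ihb g hg
      refine ⟨?_, ?_⟩
      · rw [hPL]
        exact Subalgebra.add_mem T (Subalgebra.mul_mem T maT m2)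
          (Subalgebra.mul_mem T mbT m1)
      · rw [hPL, hPR, e1, e2]; ring
  intro f hf g hg
  exact (main f hf).2 g hg
end

section
/- The restriction of P to T is a Poisson bracket on T: for all f,g,h ∈ T, P(f,g) ∈ T, P(f,g) = −P(g,f), P(fg,h) = f·P(g,h) + g·P(f,h), and P(f, P(g,h)) = P(P(f,g), h) + P(g, P(f,h)). -/
open TensorProduct

/-- The restriction of `P` to the trace subalgebra `T` is a Poisson
bracket on `T`. -/
theorem stmt6 {A B : Type*} [Ring A] [Algebra ℂ A] [CommRing B] [Algebra ℂ B]
    (N : ℕ) (hN : 0 < N)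
    (φ : A →ₐ[ℂ] Matrix (Fin N) (Fin N) B)
    (db : A ⊗[ℂ] A →ₗ[ℂ] A ⊗[ℂ] A)
    (hLeibR : ∀ a b c : A, db (a ⊗ₜ[ℂ] (b * c)) =
      (b ⊗ₜ[ℂ] (1 : A)) * db (a ⊗ₜ[ℂ] c) + db (a ⊗ₜ[ℂ] b) * ((1 : A) ⊗ₜ[ℂ] c))
    (hLeibL : ∀ a b c : A, db ((a * b) ⊗ₜ[ℂ] c) =
      ((1 : A) ⊗ₜ[ℂ] a) * db (b ⊗ₜ[ℂ] c) + db (a ⊗ₜ[ℂ] c) * (b ⊗ₜ[ℂ] (1 : A)))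
    (hJac : ∀ a b c : A,
      LinearMap.mul' ℂ A (db (a ⊗ₜ[ℂ] LinearMap.mul' ℂ A (db (b ⊗ₜ[ℂ] c)))) -
      LinearMap.mul' ℂ A (db (b ⊗ₜ[ℂ] LinearMap.mul' ℂ A (db (a ⊗ₜ[ℂ] c)))) =
      LinearMap.mul' ℂ A (db (LinearMap.mul' ℂ A (db (a ⊗ₜ[ℂ] b)) ⊗ₜ[ℂ] c)))
    (hSkew : ∀ a b : A,
      LinearMap.mul' ℂ A (db (a ⊗ₜ[ℂ] b)) + LinearMap.mul' ℂ A (db (b ⊗ₜ[ℂ] a)) ∈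
      Submodule.span ℂ {z : A | ∃ x y : A, z = x * y - y * x})
    (Φ : Fin N → Fin N → Fin N → Fin N → (A ⊗[ℂ] A →ₗ[ℂ] B))
    (hΦ : ∀ (k j i l : Fin N) (s t : A),
      Φ k j i l (s ⊗ₜ[ℂ] t) = φ s k j * φ t i l)
    (P : B →ₗ[ℂ] B →ₗ[ℂ] B)
    (hPL : ∀ a b c : B, P (a * b) c = a * P b c + b * P a c)
    (hPR : ∀ a b c : B, P a (b * c) = c * P a b + b * P a c)
    (hPφ : ∀ (x y : A) (i j k l : Fin N),
      P (φ x i j) (φ y k l) = Φ k j i l (db (x ⊗ₜ[ℂ] y)))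
    (T : Subalgebra ℂ B)
    (hT : T = Algebra.adjoin ℂ (Set.range fun x : A => Matrix.trace (φ x))) :
    ∀ f ∈ T, ∀ g ∈ T, ∀ h ∈ T,
      P f g ∈ T ∧
      P f g = - P g f ∧
      P (f * g) h = f * P g h + g * P f h ∧
      P f (P g h) = P (P f g) h + P g (P f h) := by
  subst hT
  set T := Algebra.adjoin ℂ (Set.range fun x : A => Matrix.trace (φ x)) with hT
  -- traces are in T
  have trT : ∀ a : A, Matrix.trace (φ a) ∈ T := fun a => Algebra.subset_adjoin ⟨a, rfl⟩
  -- P vanishes on scalars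
  have hP1L : ∀ c : B, P 1 c = 0 := by
    intro c
    have h := hPL 1 1 c
    simp only [one_mul] at h
    exact (left_eq_add.mp h)
  have hP1R : ∀ c : B, P c 1 = 0 := by
    intro c
    have h := hPR c 1 1
    simp only [one_mul] at h
    exact (left_eq_add.mp h)
  have hPalgL : ∀ (r : ℂ) (c : B), P (algebraMap ℂ B r) c = 0 := by
    intro r c
    rw [Algebra.algebraMap_eq_smul_one, map_smul, LinearMap.smul_apply, hP1L, smul_zero]
  have hPalgR : ∀ (r : ℂ) (c : B), P c (algebraMap ℂ B r) = 0 := by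
    intro r c
    rw [Algebra.algebraMap_eq_smul_one, map_smul, hP1R, smul_zero]
  -- the key computation: P on traces is the trace of the multiplied double bracket
  have hz : ∀ z : A ⊗[ℂ] A,
      (∑ i : Fin N, ∑ l : Fin N, Φ l i i l z) = Matrix.trace (φ (LinearMap.mul' ℂ A z)) := by
    intro z
    induction z using TensorProduct.induction_on with
    | zero => simp
    | tmul s t =>
      simp only [hΦ, LinearMap.mul'_apply, map_mul, Matrix.trace, Matrix.diag,
        Matrix.mul_apply]
      exact Finset.sum_comm
    | add u v hu hv =>
      simp only [map_add, Finset.sum_add_distrib, hu, hv, Matrix.trace_add]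
  have key : ∀ x y : A, P (Matrix.trace (φ x)) (Matrix.trace (φ y)) =
      Matrix.trace (φ (LinearMap.mul' ℂ A (db (x ⊗ₜ[ℂ] y)))) := by
    intro x y
    rw [← hz]
    simp only [Matrix.trace, Matrix.diag, map_sum, LinearMap.sum_apply, hPφ]
    exact Finset.sum_comm
  -- trace kills commutators
  have trComm : ∀ a ∈ Submodule.span ℂ {z : A | ∃ x y : A, z = x * y - y * x},
      Matrix.trace (φ a) = 0 := by
    intro a ha
    induction ha using Submodule.span_induction with
    | mem z hzz =>
      obtain ⟨x, y, rfl⟩ := hzz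
      rw [map_sub, map_mul, map_mul, Matrix.trace_sub, Matrix.trace_mul_comm, sub_self]
    | zero => simp
    | add x y hx hy ihx ihy => rw [map_add, Matrix.trace_add, ihx, ihy, add_zero]
    | smul r x hx ihx => rw [map_smul, Matrix.trace_smul, ihx, smul_zero]
  -- membership
  have memT : ∀ f ∈ T, ∀ g ∈ T, P f g ∈ T := by
    intro f hf
    induction hf using Algebra.adjoin_induction with
    | mem x hx =>
      obtain ⟨x, rfl⟩ := hx
      intro g hg
      induction hg using Algebra.adjoin_induction with
      | mem y hy =>
        obtain ⟨y, rfl⟩ := hy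
        rw [key]
        exact trT _
      | algebraMap r => rw [hPalgR]; exact zero_mem _
      | add u v hu' hv' hu hv => rw [map_add]; exact add_mem hu hv
      | mul u v hu' hv' hu hv =>
        rw [hPR]
        exact add_mem (mul_mem hv' hu) (mul_mem hu' hv)
    | algebraMap r => intro g hg; rw [hPalgL]; exact zero_mem _
    | add u v hu' hv' hu hv =>
      intro g hg
      rw [map_add, LinearMap.add_apply]
      exact add_mem (hu g hg) (hv g hg)
    | mul u v hu' hv' hu hv =>
      intro g hg
      rw [hPL]
      exact add_mem (mul_mem hu' (hv g hg)) (mul_mem hv' (hu g hg))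
  -- antisymmetry
  have anti : ∀ f ∈ T, ∀ g ∈ T, P f g + P g f = 0 := by
    intro f hf
    induction hf using Algebra.adjoin_induction with
    | mem x hx =>
      obtain ⟨x, rfl⟩ := hx
      intro g hg
      induction hg using Algebra.adjoin_induction with
      | mem y hy =>
        obtain ⟨y, rfl⟩ := hy
        rw [key, key]
        simpa [map_add] using trComm _ (hSkew x y)
      | algebraMap r => rw [hPalgR, hPalgL, add_zero]
      | add u v hu' hv' hu hv =>
        simp only [map_add, LinearMap.add_apply]
        linear_combination hu + hv
      | mul u v hu' hv' hu hv =>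
        rw [hPR, hPL]
        linear_combination u * hv + v * hu
    | algebraMap r => intro g hg; rw [hPalgL, hPalgR, add_zero]
    | add u v hu' hv' hu hv =>
      intro g hg
      simp only [map_add, LinearMap.add_apply]
      linear_combination hu g hg + hv g hg
    | mul u v hu' hv' hu hv =>
      intro g hg
      rw [hPL, hPR]
      linear_combination u * hv g hg + v * hu g hg
  -- Jacobi identity
  have jac : ∀ f ∈ T, ∀ g ∈ T, ∀ h ∈ T,
      P f (P g h) = P (P f g) h + P g (P f h) := by
    intro f hf
    induction hf using Algebra.adjoin_induction with
    | mem x hx =>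
      obtain ⟨x, rfl⟩ := hx
      intro g hg
      induction hg using Algebra.adjoin_induction with
      | mem y hy =>
        obtain ⟨y, rfl⟩ := hy
        intro h hh
        induction hh using Algebra.adjoin_induction with
        | mem z hzz =>
          obtain ⟨z, rfl⟩ := hzz
          rw [key y z, key x z, key x y, key, key, key]
          have hj := congrArg (fun a : A => Matrix.trace (φ a)) (hJac x y z)
          simp only [map_sub, Matrix.trace_sub] at hj
          linear_combination hj
        | algebraMap r => simp [hPalgL, hPalgR]
        | add u v hu' hv' hu hv =>
          simp only [map_add, LinearMap.add_apply]
          linear_combination hu + hv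
        | mul u v hu' hv' hu hv =>
          simp only [hPL, hPR, map_add, LinearMap.add_apply, hPL, hPR]
          linear_combination v * hu + u * hv
      | algebraMap r =>
        intro h hh
        simp [hPalgL, hPalgR]
      | add u v hu' hv' hu hv =>
        intro h hh
        simp only [map_add, LinearMap.add_apply]
        linear_combination hu h hh + hv h hh
      | mul u v hu' hv' hu hv =>
        intro h hh
        simp only [hPL, hPR, map_add, LinearMap.add_apply, hPL, hPR]
        linear_combination u * hv h hh + v * hu h hh
    | algebraMap r =>
      intro g hg h hh
      simp [hPalgL, hPalgR]
    | add u v hu' hv' hu hv =>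
      intro g hg h hh
      simp only [map_add, LinearMap.add_apply]
      linear_combination hu g hg h hh + hv g hg h hh
    | mul u v hu' hv' hu hv =>
      intro g hg h hh
      simp only [hPL, hPR, map_add, LinearMap.add_apply, hPL, hPR]
      linear_combination u * hv g hg h hh + v * hu g hg h hh -
        (P u h) * (anti v hv' g hg) - (P v h) * (anti u hu' g hg)
  intro f hf g hg h hh
  exact ⟨memT f hf g hg, eq_neg_of_add_eq_zero_left (anti f hf g hg), hPL f g h,
    jac f hf g hg h hh⟩
end

section
/- Suppose c ∈ A is a right Casimir of the bracket {,}, i.e. μ(db(h ⊗ c)) = 0 for all h ∈ A. Then for every f ∈ T and every x in the ℂ-subalgebra of B generated by the matrix entries φ(c)_{kl} (k,l ∈ {1,…,N}), one has P(f, x) = 0. -/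
open TensorProduct

/-- If `c` is a right Casimir of `{,}` then `P(f,x) = 0` for every
trace element `f ∈ T` and every `x` in the subalgebra generated by the entries of `φ(c)`. -/
theorem stmt7 {A B : Type*} [Ring A] [Algebra ℂ A] [CommRing B] [Algebra ℂ B]
    (N : ℕ) (hN : 0 < N)
    (φ : A →ₐ[ℂ] Matrix (Fin N) (Fin N) B)
    (db : A ⊗[ℂ] A →ₗ[ℂ] A ⊗[ℂ] A)
    (hLeibR : ∀ a b c : A, db (a ⊗ₜ[ℂ] (b * c)) =
      (b ⊗ₜ[ℂ] (1 : A)) * db (a ⊗ₜ[ℂ] c) + db (a ⊗ₜ[ℂ] b) * ((1 : A) ⊗ₜ[ℂ] c))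
    (hLeibL : ∀ a b c : A, db ((a * b) ⊗ₜ[ℂ] c) =
      ((1 : A) ⊗ₜ[ℂ] a) * db (b ⊗ₜ[ℂ] c) + db (a ⊗ₜ[ℂ] c) * (b ⊗ₜ[ℂ] (1 : A)))
    (Φ : Fin N → Fin N → Fin N → Fin N → (A ⊗[ℂ] A →ₗ[ℂ] B))
    (hΦ : ∀ (k j i l : Fin N) (s t : A),
      Φ k j i l (s ⊗ₜ[ℂ] t) = φ s k j * φ t i l)
    (P : B →ₗ[ℂ] B →ₗ[ℂ] B)
    (hPL : ∀ a b c : B, P (a * b) c = a * P b c + b * P a c)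
    (hPR : ∀ a b c : B, P a (b * c) = c * P a b + b * P a c)
    (hPφ : ∀ (x y : A) (i j k l : Fin N),
      P (φ x i j) (φ y k l) = Φ k j i l (db (x ⊗ₜ[ℂ] y)))
    (T : Subalgebra ℂ B)
    (hT : T = Algebra.adjoin ℂ (Set.range fun x : A => Matrix.trace (φ x)))
    (c : A)
    (hc : ∀ h : A, LinearMap.mul' ℂ A (db (h ⊗ₜ[ℂ] c)) = 0) :
    ∀ f ∈ T, ∀ x ∈ Algebra.adjoin ℂ {b : B | ∃ k l : Fin N, b = φ c k l},
      P f x = 0 := by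
  have hPf1 : ∀ f : B, P f 1 = 0 := by
    intro f
    have h := hPR f 1 1
    simp only [mul_one, one_mul] at h
    exact right_eq_add.mp h
  have hP1x : ∀ x : B, P 1 x = 0 := by
    intro x
    have h := hPL 1 1 x
    simp only [mul_one, one_mul] at h
    exact right_eq_add.mp h
  have hsum : ∀ (k l : Fin N) (z : A ⊗[ℂ] A),
      ∑ i, Φ k i i l z = φ (LinearMap.mul' ℂ A z) k l := by
    intro k l z
    induction z using TensorProduct.induction_on with
    | zero => simp
    | tmul s t =>
        simp [hΦ, LinearMap.mul'_apply, map_mul, Matrix.mul_apply]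
    | add u v hu hv =>
        simp [map_add, Finset.sum_add_distrib, hu, hv, Matrix.add_apply]
  have key : ∀ (h : A) (k l : Fin N), P (Matrix.trace (φ h)) (φ c k l) = 0 := by
    intro h k l
    have htr : Matrix.trace (φ h) = ∑ i, φ h i i := rfl
    rw [htr, map_sum, LinearMap.sum_apply]
    have : ∀ i : Fin N, P (φ h i i) (φ c k l) = Φ k i i l (db (h ⊗ₜ[ℂ] c)) := by
      intro i; exact hPφ h c i i k l
    rw [Finset.sum_congr rfl fun i _ => this i, hsum, hc, map_zero]
    rfl
  have step1 : ∀ (h : A), ∀ x ∈ Algebra.adjoin ℂ {b : B | ∃ k l : Fin N, b = φ c k l},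
      P (Matrix.trace (φ h)) x = 0 := by
    intro h x hx
    induction hx using Algebra.adjoin_induction with
    | mem b hb => obtain ⟨k, l, rfl⟩ := hb; exact key h k l
    | algebraMap r =>
        rw [Algebra.algebraMap_eq_smul_one, map_smul, hPf1, smul_zero]
    | add a b _ _ ha hb => rw [map_add, ha, hb, add_zero]
    | mul a b _ _ ha hb => rw [hPR, ha, hb, mul_zero, mul_zero, add_zero]
  intro f hf x hx
  rw [hT] at hf
  induction hf using Algebra.adjoin_induction with
  | mem b hb => obtain ⟨h, rfl⟩ := hb; exact step1 h x hx
  | algebraMap r =>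
      rw [Algebra.algebraMap_eq_smul_one, map_smul, LinearMap.smul_apply, hP1x,
        smul_zero]
  | add a b _ _ ha hb => rw [map_add, LinearMap.add_apply, ha, hb, add_zero]
  | mul a b _ _ ha hb => rw [hPL, ha, hb, mul_zero, mul_zero, add_zero]
end

section
/- The set C := {c ∈ A : μ(db(h ⊗ c)) = 0 for all h ∈ A} of right Casimir elements is a unital ℂ-subalgebra of A, and for every c ∈ C and every f ∈ T one has P(f, Tr(φ(c))) = 0; that is, the traces of right Casimir elements are Casimir elements of the restricted bracket on T. -/
open TensorProduct

lemma stmt8_mulL {A : Type*} [Ring A] [Algebra ℂ A] (c : A) (x : A ⊗[ℂ] A) :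
    LinearMap.mul' ℂ A ((c ⊗ₜ[ℂ] (1 : A)) * x) = c * LinearMap.mul' ℂ A x := by
  induction x using TensorProduct.induction_on with
  | zero => simp
  | tmul s t => simp [Algebra.TensorProduct.tmul_mul_tmul, mul_assoc]
  | add x y hx hy => simp [mul_add, hx, hy]

lemma stmt8_mulR {A : Type*} [Ring A] [Algebra ℂ A] (c : A) (x : A ⊗[ℂ] A) :
    LinearMap.mul' ℂ A (x * ((1 : A) ⊗ₜ[ℂ] c)) = LinearMap.mul' ℂ A x * c := by
  induction x using TensorProduct.induction_on with
  | zero => simp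
  | tmul s t => simp [Algebra.TensorProduct.tmul_mul_tmul, mul_assoc]
  | add x y hx hy => simp [add_mul, hx, hy]

/-- The set of right Casimir elements is a unital ℂ-subalgebra of `A`,
and traces of right Casimirs are Casimirs of the restricted bracket on `T`. -/
theorem stmt8 {A B : Type*} [Ring A] [Algebra ℂ A] [CommRing B] [Algebra ℂ B]
    (N : ℕ) (hN : 0 < N)
    (φ : A →ₐ[ℂ] Matrix (Fin N) (Fin N) B)
    (db : A ⊗[ℂ] A →ₗ[ℂ] A ⊗[ℂ] A)
    (hLeibR : ∀ a b c : A, db (a ⊗ₜ[ℂ] (b * c)) =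
      (b ⊗ₜ[ℂ] (1 : A)) * db (a ⊗ₜ[ℂ] c) + db (a ⊗ₜ[ℂ] b) * ((1 : A) ⊗ₜ[ℂ] c))
    (hLeibL : ∀ a b c : A, db ((a * b) ⊗ₜ[ℂ] c) =
      ((1 : A) ⊗ₜ[ℂ] a) * db (b ⊗ₜ[ℂ] c) + db (a ⊗ₜ[ℂ] c) * (b ⊗ₜ[ℂ] (1 : A)))
    (Φ : Fin N → Fin N → Fin N → Fin N → (A ⊗[ℂ] A →ₗ[ℂ] B))
    (hΦ : ∀ (k j i l : Fin N) (s t : A),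
      Φ k j i l (s ⊗ₜ[ℂ] t) = φ s k j * φ t i l)
    (P : B →ₗ[ℂ] B →ₗ[ℂ] B)
    (hPL : ∀ a b c : B, P (a * b) c = a * P b c + b * P a c)
    (hPR : ∀ a b c : B, P a (b * c) = c * P a b + b * P a c)
    (hPφ : ∀ (x y : A) (i j k l : Fin N),
      P (φ x i j) (φ y k l) = Φ k j i l (db (x ⊗ₜ[ℂ] y)))
    (T : Subalgebra ℂ B)
    (hT : T = Algebra.adjoin ℂ (Set.range fun x : A => Matrix.trace (φ x))) :
    (∃ S : Subalgebra ℂ A,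
      (S : Set A) = {c : A | ∀ h : A, LinearMap.mul' ℂ A (db (h ⊗ₜ[ℂ] c)) = 0}) ∧
    (∀ c : A, (∀ h : A, LinearMap.mul' ℂ A (db (h ⊗ₜ[ℂ] c)) = 0) →
      ∀ f ∈ T, P f (Matrix.trace (φ c)) = 0) := by
  -- db (h ⊗ 1) = 0
  have hone : ∀ h : A, db (h ⊗ₜ[ℂ] (1 : A)) = 0 := by
    intro h
    have := hLeibR h 1 1
    rw [one_mul] at this
    have h1 : ((1:A) ⊗ₜ[ℂ] (1:A)) = (1 : A ⊗[ℂ] A) := rfl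
    rw [h1, one_mul, mul_one] at this
    exact right_eq_add.mp this
  constructor
  · refine ⟨⟨⟨⟨⟨{c : A | ∀ h : A, LinearMap.mul' ℂ A (db (h ⊗ₜ[ℂ] c)) = 0}, ?_⟩, ?_⟩, ?_, ?_⟩, ?_⟩, rfl⟩
    · -- mul_mem
      intro c d hc hd h
      rw [hLeibR h c d, map_add, stmt8_mulL, stmt8_mulR, hc h, hd h, mul_zero, zero_mul,
        add_zero]
    · -- one_mem
      intro h
      rw [hone h, map_zero]
    · -- add_mem
      intro c d hc hd h
      rw [TensorProduct.tmul_add, map_add, map_add, hc h, hd h, add_zero]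
    · -- zero_mem
      intro h
      rw [TensorProduct.tmul_zero, map_zero, map_zero]
    · -- algebraMap_mem
      intro r h
      rw [Algebra.algebraMap_eq_smul_one, TensorProduct.tmul_smul, map_smul, hone h,
        smul_zero, map_zero]
  · intro c hc f hf
    -- P 1 y = 0
    have hP1 : ∀ y : B, P 1 y = 0 := by
      intro y
      have := hPL 1 1 y
      simp only [one_mul] at this
      exact right_eq_add.mp this
    -- key: for generators
    have key : ∀ x : A, P (Matrix.trace (φ x)) (Matrix.trace (φ c)) = 0 := by
      intro x
      have htr : P (Matrix.trace (φ x)) (Matrix.trace (φ c)) =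
          ∑ i : Fin N, ∑ k : Fin N, Φ k i i k (db (x ⊗ₜ[ℂ] c)) := by
        simp only [Matrix.trace, Matrix.diag, map_sum, LinearMap.sum_apply, hPφ]
        rw [Finset.sum_comm]
      rw [htr]
      have hF : ∀ ω : A ⊗[ℂ] A, (∑ i : Fin N, ∑ k : Fin N, Φ k i i k ω) =
          Matrix.trace (φ (LinearMap.mul' ℂ A ω)) := by
        intro ω
        induction ω using TensorProduct.induction_on with
        | zero => simp
        | tmul s t =>
          simp only [hΦ, LinearMap.mul'_apply, map_mul, Matrix.trace, Matrix.diag,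
            Matrix.mul_apply]
          rw [Finset.sum_comm]
        | add x y hx hy =>
          simp only [map_add, Matrix.trace_add, Finset.sum_add_distrib]
          rw [hx, hy]
      rw [hF, hc x, map_zero, Matrix.trace_zero]
    subst hT
    induction hf using Algebra.adjoin_induction with
    | mem f hf =>
      obtain ⟨x, rfl⟩ := hf
      exact key x
    | algebraMap r =>
      rw [Algebra.algebraMap_eq_smul_one, map_smul, LinearMap.smul_apply, hP1, smul_zero]
    | add a b ha hb hha hhb => rw [map_add, LinearMap.add_apply, hha, hhb, add_zero]
    | mul a b ha hb hha hhb => rw [hPL, hha, hhb, mul_zero, mul_zero, add_zero]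
end

section
/- Let δ₁, δ₂ be double derivations on A and define the ℂ-linear map R : A ⊗ A → A ⊗ A by letting R(a ⊗ b) be the image of δ₁(a) ⊗ δ₂(b) ∈ A⊗A⊗A⊗A under the linear map (x ⊗ y) ⊗ (s ⊗ t) ↦ (s·y) ⊗ (x·t) (in Sweedler notation, R(a ⊗ b) = δ₂(b)′·δ₁(a)″ ⊗ δ₁(a)′·δ₂(b)″). Then R is a double bracket on A: for all a,b,c ∈ A, R(ab ⊗ c) = (1 ⊗ a)·R(b ⊗ c) + R(a ⊗ c)·(b ⊗ 1) and R(a ⊗ bc) = (b ⊗ 1)·R(a ⊗ c) + R(a ⊗ b)·(1 ⊗ c), with products taken in the tensor-product algebra A ⊗ A. -/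
open TensorProduct

/-- Given double derivations `δ₁, δ₂` on `A`, the map
`R(a ⊗ b) = δ₂(b)′δ₁(a)″ ⊗ δ₁(a)′δ₂(b)″` is a double bracket on `A`. -/
theorem stmt11 {A : Type*} [Ring A] [Algebra ℂ A]
    (δ₁ δ₂ : A →ₗ[ℂ] A ⊗[ℂ] A)
    (hδ₁ : ∀ a b : A, δ₁ (a * b) =
      (a ⊗ₜ[ℂ] (1 : A)) * δ₁ b + δ₁ a * ((1 : A) ⊗ₜ[ℂ] b))
    (hδ₂ : ∀ a b : A, δ₂ (a * b) =
      (a ⊗ₜ[ℂ] (1 : A)) * δ₂ b + δ₂ a * ((1 : A) ⊗ₜ[ℂ] b))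
    (Ψ : (A ⊗[ℂ] A) ⊗[ℂ] (A ⊗[ℂ] A) →ₗ[ℂ] A ⊗[ℂ] A)
    (hΨ : ∀ x y s t : A,
      Ψ ((x ⊗ₜ[ℂ] y) ⊗ₜ[ℂ] (s ⊗ₜ[ℂ] t)) = (s * y) ⊗ₜ[ℂ] (x * t))
    (R : A ⊗[ℂ] A →ₗ[ℂ] A ⊗[ℂ] A)
    (hR : ∀ a b : A, R (a ⊗ₜ[ℂ] b) = Ψ (δ₁ a ⊗ₜ[ℂ] δ₂ b)) :
    (∀ a b c : A, R ((a * b) ⊗ₜ[ℂ] c) =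
      ((1 : A) ⊗ₜ[ℂ] a) * R (b ⊗ₜ[ℂ] c) + R (a ⊗ₜ[ℂ] c) * (b ⊗ₜ[ℂ] (1 : A))) ∧
    (∀ a b c : A, R (a ⊗ₜ[ℂ] (b * c)) =
      (b ⊗ₜ[ℂ] (1 : A)) * R (a ⊗ₜ[ℂ] c) + R (a ⊗ₜ[ℂ] b) * ((1 : A) ⊗ₜ[ℂ] c)) := by
  have L1 : ∀ (a : A) (u v : A ⊗[ℂ] A),
      Ψ (((a ⊗ₜ[ℂ] (1 : A)) * u) ⊗ₜ[ℂ] v) = ((1 : A) ⊗ₜ[ℂ] a) * Ψ (u ⊗ₜ[ℂ] v) := by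
    intro a u v
    induction u using TensorProduct.induction_on with
    | zero => simp
    | tmul x y =>
      rw [Algebra.TensorProduct.tmul_mul_tmul, one_mul]
      induction v using TensorProduct.induction_on with
      | zero => simp
      | tmul s t =>
        simp only [Algebra.TensorProduct.tmul_mul_tmul, hΨ, one_mul, mul_assoc]
      | add v₁ v₂ h₁ h₂ => simp [TensorProduct.tmul_add, h₁, h₂, mul_add]
    | add u₁ u₂ h₁ h₂ => simp [mul_add, TensorProduct.add_tmul, h₁, h₂]
  have L2 : ∀ (b : A) (u v : A ⊗[ℂ] A),
      Ψ ((u * ((1 : A) ⊗ₜ[ℂ] b)) ⊗ₜ[ℂ] v) = Ψ (u ⊗ₜ[ℂ] v) * (b ⊗ₜ[ℂ] (1 : A)) := by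
    intro b u v
    induction u using TensorProduct.induction_on with
    | zero => simp
    | tmul x y =>
      rw [Algebra.TensorProduct.tmul_mul_tmul, mul_one]
      induction v using TensorProduct.induction_on with
      | zero => simp
      | tmul s t =>
        simp only [Algebra.TensorProduct.tmul_mul_tmul, hΨ, mul_one, mul_assoc]
      | add v₁ v₂ h₁ h₂ => simp [TensorProduct.tmul_add, h₁, h₂, add_mul]
    | add u₁ u₂ h₁ h₂ => simp [add_mul, TensorProduct.add_tmul, h₁, h₂]
  have L3 : ∀ (b : A) (u v : A ⊗[ℂ] A),
      Ψ (u ⊗ₜ[ℂ] ((b ⊗ₜ[ℂ] (1 : A)) * v)) = (b ⊗ₜ[ℂ] (1 : A)) * Ψ (u ⊗ₜ[ℂ] v) := by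
    intro b u v
    induction u using TensorProduct.induction_on with
    | zero => simp
    | tmul x y =>
      induction v using TensorProduct.induction_on with
      | zero => simp
      | tmul s t =>
        simp only [Algebra.TensorProduct.tmul_mul_tmul, hΨ, one_mul, mul_assoc]
      | add v₁ v₂ h₁ h₂ => simp_all [mul_add, TensorProduct.tmul_add]
    | add u₁ u₂ h₁ h₂ => simp [TensorProduct.add_tmul, h₁, h₂, mul_add]
  have L4 : ∀ (c : A) (u v : A ⊗[ℂ] A),
      Ψ (u ⊗ₜ[ℂ] (v * ((1 : A) ⊗ₜ[ℂ] c))) = Ψ (u ⊗ₜ[ℂ] v) * ((1 : A) ⊗ₜ[ℂ] c) := by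
    intro c u v
    induction u using TensorProduct.induction_on with
    | zero => simp
    | tmul x y =>
      induction v using TensorProduct.induction_on with
      | zero => simp
      | tmul s t =>
        simp only [Algebra.TensorProduct.tmul_mul_tmul, hΨ, mul_one, mul_assoc]
      | add v₁ v₂ h₁ h₂ => simp_all [add_mul, TensorProduct.tmul_add]
    | add u₁ u₂ h₁ h₂ => simp [TensorProduct.add_tmul, h₁, h₂, add_mul]
  constructor
  · intro a b c
    rw [hR, hδ₁, TensorProduct.add_tmul, map_add, L1, L2, hR, hR]
  · intro a b c
    rw [hR, hδ₂, TensorProduct.tmul_add, map_add, L3, L4, hR, hR]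
end

section
/- Let k ≥ 1 and let δ₁,…,δ_k be double derivations on A. Define the ℂ-linear map D : A^{⊗k} → A^{⊗k} whose value on a₁ ⊗ … ⊗ a_k has, as its m-th tensor factor (1 ≤ m ≤ k), the product δ_{k−m+1}(a_{k−m+1})′ · δ_{σ(k−m+1)}(a_{σ(k−m+1)})″, where σ(i) := (i mod k) + 1 and Sweedler notation δ(a) = δ(a)′ ⊗ δ(a)″ is used (so D(a₁ ⊗ … ⊗ a_k) = δ_k(a_k)′δ₁(a₁)″ ⊗ δ_{k−1}(a_{k−1})′δ_k(a_k)″ ⊗ … ⊗ δ₁(a₁)′δ₂(a₂)″). Then D is a k-derivation in the cyclic sense: for each i ∈ {1,…,k} and all a₁,…,a_k, b, c ∈ A, D(a₁ ⊗ … ⊗ bc ⊗ … ⊗ a_k) (with bc in position i) equals L_b · D(a₁ ⊗ … ⊗ c ⊗ … ⊗ a_k) + D(a₁ ⊗ … ⊗ b ⊗ … ⊗ a_k) · R_c, where L_b ∈ A^{⊗k} is the elementary tensor with b in position k−i+1 and 1 elsewhere, and R_c ∈ A^{⊗k} is the elementary tensor with c in position ((1−i) mod k) + 1 and 1 elsewhere,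 products taken in the tensor-product algebra A^{⊗k}. -/
open TensorProduct PiTensorProduct

private lemma fin_sub_one_rev (k : ℕ) [NeZero k] (i : Fin k) : (i - 1).rev = -i := by
  rw [Fin.rev_sub]
  ext
  simp [Fin.rev, Fin.add_def, Fin.neg_def, Fin.val_one']
  have := i.isLt
  congr 1
  omega

/-- Two multilinear maps on `Fin k → A ⊗ A` agreeing on pure tensors agree. -/
private lemma multilinear_ext_pure {A : Type*} [Ring A] [Algebra ℂ A] {k : ℕ}
    {N : Type*} [AddCommMonoid N] [Module ℂ N]
    (f g : MultilinearMap ℂ (fun _ : Fin k => A ⊗[ℂ] A) N)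
    (h : ∀ x y : Fin k → A, f (fun j => x j ⊗ₜ[ℂ] y j) = g (fun j => x j ⊗ₜ[ℂ] y j)) :
    ∀ z, f z = g z := by
  have key : ∀ (s : Finset (Fin k)) (z : Fin k → A ⊗[ℂ] A),
      (∀ j ∉ s, ∃ x y : A, z j = x ⊗ₜ[ℂ] y) → f z = g z := by
    intro s
    induction s using Finset.induction_on with
    | empty =>
      intro z hz
      simp only [Finset.notMem_empty, not_false_iff, true_implies] at hz
      choose x y hxy using hz
      have : z = fun j => x j ⊗ₜ[ℂ] y j := funext hxy
      rw [this]; exact h x y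
    | @insert j s hj ih =>
      intro z hz
      have main : ∀ w : A ⊗[ℂ] A, f (Function.update z j w) = g (Function.update z j w) := by
        intro w
        induction w with
        | zero => rw [f.map_update_zero, g.map_update_zero]
        | tmul x y =>
          apply ih
          intro j' hj'
          by_cases hjj : j' = j
          · subst hjj; exact ⟨x, y, by simp⟩
          · have : z j' = Function.update z j (x ⊗ₜ[ℂ] y) j' := by
              simp [Function.update_of_ne hjj]
            rw [← this]
            exact hz j' (by simp [hjj, hj'])
        | add u v hu hv =>
          rw [f.map_update_add, g.map_update_add, hu, hv]
      have := main (z j)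
      rwa [Function.update_eq_self] at this
  intro z
  exact key Finset.univ z (fun j hj => absurd (Finset.mem_univ j) hj)

/-- The composite of double derivations arranged cyclically is a
`k`-derivation in the cyclic sense on the `k`-fold tensor power of `A`. -/
theorem stmt12 {A : Type*} [Ring A] [Algebra ℂ A] (k : ℕ) [NeZero k]
    (δ : Fin k → (A →ₗ[ℂ] A ⊗[ℂ] A))
    (hδ : ∀ (i : Fin k) (a b : A), δ i (a * b) =
      (a ⊗ₜ[ℂ] (1 : A)) * δ i b + δ i a * ((1 : A) ⊗ₜ[ℂ] b))
    (Ψ : (⨂[ℂ] _ : Fin k, (A ⊗[ℂ] A)) →ₗ[ℂ] ⨂[ℂ] _ : Fin k, A)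
    (hΨ : ∀ x y : Fin k → A,
      Ψ (PiTensorProduct.tprod ℂ (fun i => x i ⊗ₜ[ℂ] y i)) =
        PiTensorProduct.tprod ℂ (fun m => x m.rev * y (m.rev + 1)))
    (D : (⨂[ℂ] _ : Fin k, A) →ₗ[ℂ] ⨂[ℂ] _ : Fin k, A)
    (hD : ∀ a : Fin k → A,
      D (PiTensorProduct.tprod ℂ a) = Ψ (PiTensorProduct.tprod ℂ (fun i => δ i (a i)))) :
    ∀ (i : Fin k) (a : Fin k → A) (b c : A),
      D (PiTensorProduct.tprod ℂ (Function.update a i (b * c))) =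
        (PiTensorProduct.tprod ℂ (fun m => if m = i.rev then b else (1 : A))) *
          D (PiTensorProduct.tprod ℂ (Function.update a i c)) +
        D (PiTensorProduct.tprod ℂ (Function.update a i b)) *
          (PiTensorProduct.tprod ℂ (fun m => if m = -i then c else (1 : A))) := by
  intro i a b c
  set M : MultilinearMap ℂ (fun _ : Fin k => A ⊗[ℂ] A) (⨂[ℂ] _ : Fin k, A) :=
    Ψ.compMultilinearMap (PiTensorProduct.tprod ℂ) with hM
  -- left key lemma
  have keyL : ∀ z : Fin k → A ⊗[ℂ] A,
      M (Function.update z i ((b ⊗ₜ[ℂ] (1 : A)) * z i)) =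
        (PiTensorProduct.tprod ℂ (fun m => if m = i.rev then b else (1 : A))) * M z := by
    have ext := multilinear_ext_pure
      (M.compLinearMap (fun j =>
        if j = i then LinearMap.mulLeft ℂ (b ⊗ₜ[ℂ] (1 : A)) else LinearMap.id))
      ((LinearMap.mulLeft ℂ
        (PiTensorProduct.tprod ℂ (fun m => if m = i.rev then b else (1 : A)))).compMultilinearMap M)
      ?_
    · intro z
      have h1 := ext z
      simp only [MultilinearMap.compLinearMap_apply, LinearMap.compMultilinearMap_apply,
        LinearMap.mulLeft_apply] at h1
      have harg : Function.update z i ((b ⊗ₜ[ℂ] (1 : A)) * z i) =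
          fun j => (if j = i then LinearMap.mulLeft ℂ (b ⊗ₜ[ℂ] (1 : A))
            else LinearMap.id) (z j) := by
        funext j
        by_cases hji : j = i
        · subst hji; simp
        · simp [Function.update_of_ne hji, hji]
      rw [harg]; exact h1
    · intro x y
      simp only [MultilinearMap.compLinearMap_apply, LinearMap.compMultilinearMap_apply,
        LinearMap.mulLeft_apply, hM]
      have hfun : (fun j => (if j = i then LinearMap.mulLeft ℂ (b ⊗ₜ[ℂ] (1 : A))
          else LinearMap.id) (x j ⊗ₜ[ℂ] y j)) =
          fun j => (Function.update x i (b * x i)) j ⊗ₜ[ℂ] y j := by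
        funext j
        by_cases hji : j = i
        · subst hji
          simp [Algebra.TensorProduct.tmul_mul_tmul]
        · simp [hji, Function.update_of_ne hji]
      rw [hfun, hΨ, hΨ, PiTensorProduct.tprod_mul_tprod]
      congr 1
      funext m
      by_cases hm : m = i.rev
      · subst hm
        rw [Pi.mul_apply, if_pos rfl, Fin.rev_rev, Function.update_self, mul_assoc]
      · have hne : m.rev ≠ i := fun h => hm (by rw [← h, Fin.rev_rev])
        rw [Pi.mul_apply, if_neg hm, Function.update_of_ne hne, one_mul]
  -- right key lemma
  have keyR : ∀ z : Fin k → A ⊗[ℂ] A,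
      M (Function.update z i (z i * ((1 : A) ⊗ₜ[ℂ] c))) =
        M z * (PiTensorProduct.tprod ℂ (fun m => if m = -i then c else (1 : A))) := by
    have hnegrev : (-i : Fin k).rev + 1 = i := by
      rw [← fin_sub_one_rev k i, Fin.rev_rev]; open Fin.CommRing in ring
    have ext := multilinear_ext_pure
      (M.compLinearMap (fun j =>
        if j = i then LinearMap.mulRight ℂ ((1 : A) ⊗ₜ[ℂ] c) else LinearMap.id))
      ((LinearMap.mulRight ℂ
        (PiTensorProduct.tprod ℂ (fun m => if m = -i then c else (1 : A)))).compMultilinearMap M)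
      ?_
    · intro z
      have h1 := ext z
      simp only [MultilinearMap.compLinearMap_apply, LinearMap.compMultilinearMap_apply,
        LinearMap.mulRight_apply] at h1
      have harg : Function.update z i (z i * ((1 : A) ⊗ₜ[ℂ] c)) =
          fun j => (if j = i then LinearMap.mulRight ℂ ((1 : A) ⊗ₜ[ℂ] c)
            else LinearMap.id) (z j) := by
        funext j
        by_cases hji : j = i
        · subst hji; simp
        · simp [Function.update_of_ne hji, hji]
      rw [harg]; exact h1
    · intro x y
      simp only [MultilinearMap.compLinearMap_apply, LinearMap.compMultilinearMap_apply,
        LinearMap.mulRight_apply, hM]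
      have hfun : (fun j => (if j = i then LinearMap.mulRight ℂ ((1 : A) ⊗ₜ[ℂ] c)
          else LinearMap.id) (x j ⊗ₜ[ℂ] y j)) =
          fun j => x j ⊗ₜ[ℂ] (Function.update y i (y i * c)) j := by
        funext j
        by_cases hji : j = i
        · subst hji
          simp [Algebra.TensorProduct.tmul_mul_tmul]
        · simp [hji, Function.update_of_ne hji]
      rw [hfun, hΨ, hΨ, PiTensorProduct.tprod_mul_tprod]
      congr 1
      funext m
      by_cases hm : m = -i
      · subst hm
        rw [Pi.mul_apply, if_pos rfl, hnegrev, Function.update_self, mul_assoc]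
      · have hne : m.rev + 1 ≠ i := by
          intro h
          apply hm
          have hmr : m.rev = i - 1 := by rw [← h]; open Fin.CommRing in ring
          rw [← Fin.rev_rev m, hmr, fin_sub_one_rev]
        rw [Pi.mul_apply, if_neg hm, Function.update_of_ne hne, mul_one]
  -- main computation
  have expand : (fun j => δ j (Function.update a i (b * c) j)) =
      Function.update (fun j => δ j (Function.update a i c j)) i (δ i (b * c)) := by
    funext j
    by_cases hji : j = i
    · subst hji; simp
    · simp [Function.update_of_ne hji]
  rw [hD, expand, hδ]
  rw [MultilinearMap.map_update_add, map_add]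
  congr 1
  · have hz : Function.update (fun j => δ j (Function.update a i c j)) i
        ((b ⊗ₜ[ℂ] (1 : A)) * δ i c) =
        Function.update (fun j => δ j (Function.update a i c j)) i
        ((b ⊗ₜ[ℂ] (1 : A)) * (fun j => δ j (Function.update a i c j)) i) := by
      simp
    rw [hz]
    have hk := keyL (fun j => δ j (Function.update a i c j))
    simp only [hM, MultilinearMap.compLinearMap_apply,
      LinearMap.compMultilinearMap_apply] at hk ⊢
    rw [hk, hD]
  · have hz : Function.update (fun j => δ j (Function.update a i c j)) i
        (δ i b * ((1 : A) ⊗ₜ[ℂ] c)) =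
        Function.update (fun j => δ j (Function.update a i b j)) i
        ((fun j => δ j (Function.update a i b j)) i * ((1 : A) ⊗ₜ[ℂ] c)) := by
      funext j
      by_cases hji : j = i
      · subst hji; simp
      · simp [Function.update_of_ne hji]
    rw [hz]
    have hk := keyR (fun j => δ j (Function.update a i b j))
    simp only [hM, MultilinearMap.compLinearMap_apply,
      LinearMap.compMultilinearMap_apply] at hk ⊢
    rw [hk, hD]
end

section
/- Let A = ℂ⟨u,v⟩ be the free associative ℂ-algebra on two generators u,v, and let δ₁, δ₂, δ̃₁, δ̃₂ be the (unique) double derivations on A with δ₁(u) = 1 ⊗ u, δ₁(v) = 1 ⊗ v, δ₂(u) = u ⊗ 1, δ₂(v) = 0, δ̃₁(u) = u ⊗ 1, δ̃₁(v) = v ⊗ 1, δ̃₂(u) = 1 ⊗ u, δ̃₂(v) = 0. Define R : A ⊗ A → A ⊗ A by R(a ⊗ b) = δ₂(b)′δ₁(a)″ ⊗ δ₁(a)′δ₂(b)″ − δ̃₁(b)′δ̃₂(a)″ ⊗ δ̃₂(a)′δ̃₁(b)″ (Sweedler notation; i.e. R(a ⊗ b) is the image of δ₁(a) ⊗ δ₂(b)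 under (x⊗y)⊗(s⊗t) ↦ sy ⊗ xt, minus the image of δ̃₂(a) ⊗ δ̃₁(b) under the same map). Then R is a double bracket on A and R(u ⊗ v) = −(vu) ⊗ 1, R(v ⊗ u) = (uv) ⊗ 1, R(u ⊗ u) = 0, R(v ⊗ v) = 0; consequently R coincides with the unique double bracket db_K on A having these values on pairs of generators. -/
open TensorProduct

noncomputable section

/-- The free associative ℂ-algebra on two generators. -/
abbrev FreeA2 : Type := FreeAlgebra ℂ (Fin 2)

/-- The generator `u`. -/
def genU : FreeA2 := FreeAlgebra.ι ℂ 0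

/-- The generator `v`. -/
def genV : FreeA2 := FreeAlgebra.ι ℂ 1

/-- `db` is a double bracket: it satisfies the double Leibniz rules. -/
def IsDoubleBracket (db : FreeA2 ⊗[ℂ] FreeA2 →ₗ[ℂ] FreeA2 ⊗[ℂ] FreeA2) : Prop :=
  (∀ a b c : FreeA2, db (a ⊗ₜ[ℂ] (b * c)) =
    (b ⊗ₜ[ℂ] (1 : FreeA2)) * db (a ⊗ₜ[ℂ] c) + db (a ⊗ₜ[ℂ] b) * ((1 : FreeA2) ⊗ₜ[ℂ] c)) ∧
  (∀ a b c : FreeA2, db ((a * b) ⊗ₜ[ℂ] c) =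
    ((1 : FreeA2) ⊗ₜ[ℂ] a) * db (b ⊗ₜ[ℂ] c) + db (a ⊗ₜ[ℂ] c) * (b ⊗ₜ[ℂ] (1 : FreeA2)))

/-- The prescribed values of `db_K` on pairs of generators. -/
def KontsevichGenVals (db : FreeA2 ⊗[ℂ] FreeA2 →ₗ[ℂ] FreeA2 ⊗[ℂ] FreeA2) : Prop :=
  db (genU ⊗ₜ[ℂ] genV) = -((genV * genU) ⊗ₜ[ℂ] (1 : FreeA2)) ∧
  db (genV ⊗ₜ[ℂ] genU) = (genU * genV) ⊗ₜ[ℂ] (1 : FreeA2) ∧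
  db (genU ⊗ₜ[ℂ] genU) = 0 ∧
  db (genV ⊗ₜ[ℂ] genV) = 0

section PsiAux

variable (Ψ : (FreeA2 ⊗[ℂ] FreeA2) ⊗[ℂ] (FreeA2 ⊗[ℂ] FreeA2) →ₗ[ℂ] FreeA2 ⊗[ℂ] FreeA2)
variable (hΨ : ∀ x y s t : FreeA2,
      Ψ ((x ⊗ₜ[ℂ] y) ⊗ₜ[ℂ] (s ⊗ₜ[ℂ] t)) = (s * y) ⊗ₜ[ℂ] (x * t))

include hΨ

lemma psiA (b : FreeA2) (ω μ : FreeA2 ⊗[ℂ] FreeA2) :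
    Ψ (ω ⊗ₜ[ℂ] ((b ⊗ₜ[ℂ] (1 : FreeA2)) * μ)) = (b ⊗ₜ[ℂ] (1 : FreeA2)) * Ψ (ω ⊗ₜ[ℂ] μ) := by
  induction ω using TensorProduct.induction_on with
  | zero => simp
  | tmul x y =>
    induction μ using TensorProduct.induction_on with
    | zero => simp
    | tmul s t => simp [Algebra.TensorProduct.tmul_mul_tmul, hΨ, mul_assoc]
    | add p q hp hq => simp [mul_add, TensorProduct.tmul_add, hp, hq]
  | add p q hp hq => simp [TensorProduct.add_tmul, hp, hq, mul_add]

lemma psiB (c : FreeA2) (ω μ : FreeA2 ⊗[ℂ] FreeA2) :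
    Ψ (ω ⊗ₜ[ℂ] (μ * ((1 : FreeA2) ⊗ₜ[ℂ] c))) = Ψ (ω ⊗ₜ[ℂ] μ) * ((1 : FreeA2) ⊗ₜ[ℂ] c) := by
  induction ω using TensorProduct.induction_on with
  | zero => simp
  | tmul x y =>
    induction μ using TensorProduct.induction_on with
    | zero => simp
    | tmul s t => simp [Algebra.TensorProduct.tmul_mul_tmul, hΨ, mul_assoc]
    | add p q hp hq => simp [add_mul, TensorProduct.tmul_add, hp, hq]
  | add p q hp hq => simp [TensorProduct.add_tmul, hp, hq, add_mul]

lemma psiC (a : FreeA2) (ω μ : FreeA2 ⊗[ℂ] FreeA2) :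
    Ψ (((a ⊗ₜ[ℂ] (1 : FreeA2)) * ω) ⊗ₜ[ℂ] μ) = ((1 : FreeA2) ⊗ₜ[ℂ] a) * Ψ (ω ⊗ₜ[ℂ] μ) := by
  induction μ using TensorProduct.induction_on with
  | zero => simp
  | tmul s t =>
    induction ω using TensorProduct.induction_on with
    | zero => simp
    | tmul x y => simp [Algebra.TensorProduct.tmul_mul_tmul, hΨ, mul_assoc]
    | add p q hp hq => simp [mul_add, TensorProduct.add_tmul, hp, hq]
  | add p q hp hq => simp [TensorProduct.tmul_add, hp, hq, mul_add]

lemma psiD (b : FreeA2) (ω μ : FreeA2 ⊗[ℂ] FreeA2) :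
    Ψ ((ω * ((1 : FreeA2) ⊗ₜ[ℂ] b)) ⊗ₜ[ℂ] μ) = Ψ (ω ⊗ₜ[ℂ] μ) * (b ⊗ₜ[ℂ] (1 : FreeA2)) := by
  induction μ using TensorProduct.induction_on with
  | zero => simp
  | tmul s t =>
    induction ω using TensorProduct.induction_on with
    | zero => simp
    | tmul x y => simp [Algebra.TensorProduct.tmul_mul_tmul, hΨ, mul_assoc]
    | add p q hp hq => simp [add_mul, TensorProduct.add_tmul, hp, hq]
  | add p q hp hq => simp [TensorProduct.tmul_add, hp, hq, add_mul]

end PsiAux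

/-- The bivector `δ₁ ⋆ δ₂ − δ̃₂ ⋆ δ̃₁` built from the four indicated
double derivations induces a double bracket on `ℂ⟨u,v⟩` which coincides with the
unique double bracket `db_K` with the Kontsevich values on generators. -/
theorem stmt13
    (δ₁ δ₂ tδ₁ tδ₂ : FreeA2 →ₗ[ℂ] FreeA2 ⊗[ℂ] FreeA2)
    (hδ₁ : ∀ a b : FreeA2, δ₁ (a * b) =
      (a ⊗ₜ[ℂ] (1 : FreeA2)) * δ₁ b + δ₁ a * ((1 : FreeA2) ⊗ₜ[ℂ] b))
    (hδ₂ : ∀ a b : FreeA2, δ₂ (a * b) =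
      (a ⊗ₜ[ℂ] (1 : FreeA2)) * δ₂ b + δ₂ a * ((1 : FreeA2) ⊗ₜ[ℂ] b))
    (htδ₁ : ∀ a b : FreeA2, tδ₁ (a * b) =
      (a ⊗ₜ[ℂ] (1 : FreeA2)) * tδ₁ b + tδ₁ a * ((1 : FreeA2) ⊗ₜ[ℂ] b))
    (htδ₂ : ∀ a b : FreeA2, tδ₂ (a * b) =
      (a ⊗ₜ[ℂ] (1 : FreeA2)) * tδ₂ b + tδ₂ a * ((1 : FreeA2) ⊗ₜ[ℂ] b))
    (hδ₁u : δ₁ genU = (1 : FreeA2) ⊗ₜ[ℂ] genU) (hδ₁v : δ₁ genV = (1 : FreeA2) ⊗ₜ[ℂ] genV)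
    (hδ₂u : δ₂ genU = genU ⊗ₜ[ℂ] (1 : FreeA2)) (hδ₂v : δ₂ genV = 0)
    (htδ₁u : tδ₁ genU = genU ⊗ₜ[ℂ] (1 : FreeA2)) (htδ₁v : tδ₁ genV = genV ⊗ₜ[ℂ] (1 : FreeA2))
    (htδ₂u : tδ₂ genU = (1 : FreeA2) ⊗ₜ[ℂ] genU) (htδ₂v : tδ₂ genV = 0)
    (Ψ : (FreeA2 ⊗[ℂ] FreeA2) ⊗[ℂ] (FreeA2 ⊗[ℂ] FreeA2) →ₗ[ℂ] FreeA2 ⊗[ℂ] FreeA2)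
    (hΨ : ∀ x y s t : FreeA2,
      Ψ ((x ⊗ₜ[ℂ] y) ⊗ₜ[ℂ] (s ⊗ₜ[ℂ] t)) = (s * y) ⊗ₜ[ℂ] (x * t))
    (R : FreeA2 ⊗[ℂ] FreeA2 →ₗ[ℂ] FreeA2 ⊗[ℂ] FreeA2)
    (hR : ∀ a b : FreeA2,
      R (a ⊗ₜ[ℂ] b) = Ψ (δ₁ a ⊗ₜ[ℂ] δ₂ b) - Ψ (tδ₂ a ⊗ₜ[ℂ] tδ₁ b)) :
    IsDoubleBracket R ∧ KontsevichGenVals R ∧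
    (∀ db : FreeA2 ⊗[ℂ] FreeA2 →ₗ[ℂ] FreeA2 ⊗[ℂ] FreeA2,
      IsDoubleBracket db ∧ KontsevichGenVals db → db = R) := by
  have hRule1 : ∀ a b c : FreeA2, R (a ⊗ₜ[ℂ] (b * c)) =
      (b ⊗ₜ[ℂ] (1 : FreeA2)) * R (a ⊗ₜ[ℂ] c) + R (a ⊗ₜ[ℂ] b) * ((1 : FreeA2) ⊗ₜ[ℂ] c) := by
    intro a b c
    rw [hR, hδ₂ b c, htδ₁ b c, hR, hR]
    simp only [TensorProduct.tmul_add, map_add, psiA Ψ hΨ, psiB Ψ hΨ]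
    simp only [mul_sub, sub_mul]; abel
  have hRule2 : ∀ a b c : FreeA2, R ((a * b) ⊗ₜ[ℂ] c) =
      ((1 : FreeA2) ⊗ₜ[ℂ] a) * R (b ⊗ₜ[ℂ] c) + R (a ⊗ₜ[ℂ] c) * (b ⊗ₜ[ℂ] (1 : FreeA2)) := by
    intro a b c
    rw [hR, hδ₁ a b, htδ₂ a b, hR, hR]
    simp only [TensorProduct.add_tmul, map_add, psiC Ψ hΨ, psiD Ψ hΨ]
    simp only [mul_sub, sub_mul]; abel
  have hDB : IsDoubleBracket R := ⟨hRule1, hRule2⟩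
  have hVuv : R (genU ⊗ₜ[ℂ] genV) = -((genV * genU) ⊗ₜ[ℂ] (1 : FreeA2)) := by
    rw [hR, hδ₁u, hδ₂v, htδ₂u, htδ₁v]
    simp [hΨ]
  have hVvu : R (genV ⊗ₜ[ℂ] genU) = (genU * genV) ⊗ₜ[ℂ] (1 : FreeA2) := by
    rw [hR, hδ₁v, hδ₂u, htδ₂v, htδ₁u]
    simp [hΨ]
  have hVuu : R (genU ⊗ₜ[ℂ] genU) = 0 := by
    rw [hR, hδ₁u, hδ₂u, htδ₂u, htδ₁u]
    simp [hΨ]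
  have hVvv : R (genV ⊗ₜ[ℂ] genV) = 0 := by
    rw [hR, hδ₁v, hδ₂v, htδ₂v, htδ₁v]
    simp [hΨ]
  have hKV : KontsevichGenVals R := ⟨hVuv, hVvu, hVuu, hVvv⟩
  refine ⟨hDB, hKV, ?_⟩
  rintro db ⟨⟨db1, db2⟩, k1, k2, k3, k4⟩
  set D : FreeA2 ⊗[ℂ] FreeA2 →ₗ[ℂ] FreeA2 ⊗[ℂ] FreeA2 := db - R with hDdef
  have hDapp : ∀ x, D x = db x - R x := fun x => rfl
  have DL1 : ∀ a b c : FreeA2, D (a ⊗ₜ[ℂ] (b * c)) =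
      (b ⊗ₜ[ℂ] (1 : FreeA2)) * D (a ⊗ₜ[ℂ] c) + D (a ⊗ₜ[ℂ] b) * ((1 : FreeA2) ⊗ₜ[ℂ] c) := by
    intro a b c
    simp only [hDapp, db1 a b c, hRule1 a b c]
    simp only [mul_sub, sub_mul]; abel
  have DL2 : ∀ a b c : FreeA2, D ((a * b) ⊗ₜ[ℂ] c) =
      ((1 : FreeA2) ⊗ₜ[ℂ] a) * D (b ⊗ₜ[ℂ] c) + D (a ⊗ₜ[ℂ] c) * (b ⊗ₜ[ℂ] (1 : FreeA2)) := by
    intro a b c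
    simp only [hDapp, db2 a b c, hRule2 a b c]
    simp only [mul_sub, sub_mul]; abel
  have hDuv : D (genU ⊗ₜ[ℂ] genV) = 0 := by rw [hDapp, k1, hVuv, sub_self]
  have hDvu : D (genV ⊗ₜ[ℂ] genU) = 0 := by rw [hDapp, k2, hVvu, sub_self]
  have hDuu : D (genU ⊗ₜ[ℂ] genU) = 0 := by rw [hDapp, k3, hVuu, sub_self]
  have hDvv : D (genV ⊗ₜ[ℂ] genV) = 0 := by rw [hDapp, k4, hVvv, sub_self]
  have hOne2 : ∀ c : FreeA2, D ((1 : FreeA2) ⊗ₜ[ℂ] c) = 0 := by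
    intro c
    have h := DL2 1 1 c
    rw [one_mul, ← Algebra.TensorProduct.one_def, one_mul, mul_one] at h
    exact left_eq_add.mp h
  have hOne1 : ∀ a : FreeA2, D (a ⊗ₜ[ℂ] (1 : FreeA2)) = 0 := by
    intro a
    have h := DL1 a 1 1
    rw [one_mul, ← Algebra.TensorProduct.one_def, one_mul, mul_one] at h
    exact left_eq_add.mp h
  have hAgen : ∀ a : FreeA2, D (a ⊗ₜ[ℂ] genU) = 0 ∧ D (a ⊗ₜ[ℂ] genV) = 0 := by
    intro a
    induction a using FreeAlgebra.induction with
    | grade0 r =>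
      constructor <;>
        rw [Algebra.algebraMap_eq_smul_one, ← TensorProduct.smul_tmul', map_smul, hOne2,
          smul_zero]
    | grade1 i =>
      fin_cases i
      · exact ⟨hDuu, hDuv⟩
      · exact ⟨hDvu, hDvv⟩
    | mul a b ha hb =>
      refine ⟨?_, ?_⟩
      · rw [DL2 a b genU, ha.1, hb.1]; simp
      · rw [DL2 a b genV, ha.2, hb.2]; simp
    | add a b ha hb =>
      refine ⟨?_, ?_⟩
      · rw [TensorProduct.add_tmul, map_add, ha.1, hb.1, add_zero]
      · rw [TensorProduct.add_tmul, map_add, ha.2, hb.2, add_zero]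
  have hall : ∀ b a : FreeA2, D (a ⊗ₜ[ℂ] b) = 0 := by
    intro b
    induction b using FreeAlgebra.induction with
    | grade0 r =>
      intro a
      rw [Algebra.algebraMap_eq_smul_one, TensorProduct.tmul_smul, map_smul, hOne1, smul_zero]
    | grade1 i =>
      intro a
      fin_cases i
      · exact (hAgen a).1
      · exact (hAgen a).2
    | mul b c hb hc =>
      intro a
      rw [DL1 a b c, hb a, hc a]; simp
    | add b c hb hc =>
      intro a
      rw [TensorProduct.tmul_add, map_add, hb a, hc a, add_zero]
  have hD0 : D = 0 := TensorProduct.ext' fun a b => (hall b a).trans rfl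
  exact sub_eq_zero.mp (hDdef ▸ hD0)

end
end

section
/- Let M be a coassociative counital ℂ-coalgebra with comultiplication Δ, let ν : M × M → ℂ be ℂ-bilinear, and define the ℂ-linear map ν̄ : M ⊗ M → M ⊗ M by letting ν̄(α ⊗ β) be the image of α ⊗ (Δ ⊗ id)(Δ(β)) under α ⊗ β¹ ⊗ β² ⊗ β³ ↦ ν(α, β²)·(β¹ ⊗ β³). Assume ν̄ is symmetric: ν̄(α ⊗ β) = ν̄(β ⊗ α) for all α, β ∈ M. Then the following identities of linear maps M ⊗ M → M ⊗ M ⊗ M hold: (id_M ⊗ Δ) ∘ ν̄ = (ν̄ ⊗ id_M) ∘ (id_M ⊗ Δ), and (Δ ⊗ id_M) ∘ ν̄ = (id_M ⊗ ν̄) ∘ τ₁₂ ∘ (id_M ⊗ Δ), where τ₁₂ : M ⊗ M ⊗ M → M ⊗ M ⊗ M swaps the first two tensor factors. (In Sweedler notation, writing ν̄(α ⊗ β) = α_β ⊗ β^α: α_β ⊗ (β^α)¹ ⊗ (β^α)² = α_{β¹} ⊗ (β¹)^α ⊗ β² and (α_β)¹ ⊗ (α_β)² ⊗ β^α = β¹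 ⊗ α_{β²} ⊗ (β²)^α.) -/
open TensorProduct

section aux

variable {M : Type*} [AddCommGroup M] [Module ℂ M] [Coalgebra ℂ M]

/-- `cL ν α (b1 ⊗ b2) = ν α b2 • b1`. -/
noncomputable def cL (ν : M →ₗ[ℂ] M →ₗ[ℂ] ℂ) (α : M) : M ⊗[ℂ] M →ₗ[ℂ] M :=
  TensorProduct.lift (((LinearMap.lsmul ℂ M).comp (ν α)).flip)

@[simp] lemma cL_tmul (ν : M →ₗ[ℂ] M →ₗ[ℂ] ℂ) (α b1 b2 : M) :
    cL ν α (b1 ⊗ₜ[ℂ] b2) = ν α b2 • b1 := rfl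

/-- `cR ν α (b1 ⊗ b2) = ν α b1 • b2`. -/
noncomputable def cR (ν : M →ₗ[ℂ] M →ₗ[ℂ] ℂ) (α : M) : M ⊗[ℂ] M →ₗ[ℂ] M :=
  TensorProduct.lift ((LinearMap.lsmul ℂ M).comp (ν α))

@[simp] lemma cR_tmul (ν : M →ₗ[ℂ] M →ₗ[ℂ] ℂ) (α b1 b2 : M) :
    cR ν α (b1 ⊗ₜ[ℂ] b2) = ν α b1 • b2 := rfl

/-- `qq ν α b = ν α b² • b¹` (Sweedler). -/
noncomputable def qq (ν : M →ₗ[ℂ] M →ₗ[ℂ] ℂ) (α : M) : M →ₗ[ℂ] M :=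
  cL ν α ∘ₗ Coalgebra.comul

/-- `pp ν α b = ν α b¹ • b²` (Sweedler). -/
noncomputable def pp (ν : M →ₗ[ℂ] M →ₗ[ℂ] ℂ) (α : M) : M →ₗ[ℂ] M :=
  cR ν α ∘ₗ Coalgebra.comul

lemma Gmk (ν : M →ₗ[ℂ] M →ₗ[ℂ] ℂ)
    (G : M ⊗[ℂ] ((M ⊗[ℂ] M) ⊗[ℂ] M) →ₗ[ℂ] M ⊗[ℂ] M)
    (hG : ∀ a b1 b2 b3 : M,
      G (a ⊗ₜ[ℂ] ((b1 ⊗ₜ[ℂ] b2) ⊗ₜ[ℂ] b3)) = ν a b2 • (b1 ⊗ₜ[ℂ] b3))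
    (α : M) (y : (M ⊗[ℂ] M) ⊗[ℂ] M) :
    G (α ⊗ₜ[ℂ] y) = TensorProduct.map (cL ν α) LinearMap.id y := by
  have h : G ∘ₗ TensorProduct.mk ℂ M ((M ⊗[ℂ] M) ⊗[ℂ] M) α
      = TensorProduct.map (cL ν α) LinearMap.id := by
    apply TensorProduct.ext_threefold
    intro x y z
    simp [hG, smul_tmul']
  exact DFunLike.congr_fun h y

lemma L1 (ν : M →ₗ[ℂ] M →ₗ[ℂ] ℂ)
    (G : M ⊗[ℂ] ((M ⊗[ℂ] M) ⊗[ℂ] M) →ₗ[ℂ] M ⊗[ℂ] M)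
    (hG : ∀ a b1 b2 b3 : M,
      G (a ⊗ₜ[ℂ] ((b1 ⊗ₜ[ℂ] b2) ⊗ₜ[ℂ] b3)) = ν a b2 • (b1 ⊗ₜ[ℂ] b3))
    (nubar : M ⊗[ℂ] M →ₗ[ℂ] M ⊗[ℂ] M)
    (hnubar : ∀ α β : M, nubar (α ⊗ₜ[ℂ] β) =
      G (α ⊗ₜ[ℂ] (LinearMap.rTensor M (Coalgebra.comul (R := ℂ))
        (Coalgebra.comul (R := ℂ) β))))
    (α b : M) :
    nubar (α ⊗ₜ[ℂ] b)
      = LinearMap.rTensor M (qq ν α) (Coalgebra.comul (R := ℂ) b) := by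
  rw [hnubar, Gmk ν G hG]
  have h : ∀ w : M ⊗[ℂ] M,
      TensorProduct.map (cL ν α) LinearMap.id
        (LinearMap.rTensor M (Coalgebra.comul (R := ℂ)) w)
      = LinearMap.rTensor M (qq ν α) w := by
    intro w
    induction w using TensorProduct.induction_on with
    | zero => simp
    | tmul b c => simp [qq]
    | add u v hu hv => simp [hu, hv]
  exact h _

lemma L2 (ν : M →ₗ[ℂ] M →ₗ[ℂ] ℂ)
    (G : M ⊗[ℂ] ((M ⊗[ℂ] M) ⊗[ℂ] M) →ₗ[ℂ] M ⊗[ℂ] M)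
    (hG : ∀ a b1 b2 b3 : M,
      G (a ⊗ₜ[ℂ] ((b1 ⊗ₜ[ℂ] b2) ⊗ₜ[ℂ] b3)) = ν a b2 • (b1 ⊗ₜ[ℂ] b3))
    (nubar : M ⊗[ℂ] M →ₗ[ℂ] M ⊗[ℂ] M)
    (hnubar : ∀ α β : M, nubar (α ⊗ₜ[ℂ] β) =
      G (α ⊗ₜ[ℂ] (LinearMap.rTensor M (Coalgebra.comul (R := ℂ))
        (Coalgebra.comul (R := ℂ) β))))
    (α b : M) :
    nubar (α ⊗ₜ[ℂ] b)
      = LinearMap.lTensor M (pp ν α) (Coalgebra.comul (R := ℂ) b) := by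
  rw [hnubar, Gmk ν G hG, ← Coalgebra.coassoc_symm_apply]
  have h1 : ∀ y : M ⊗[ℂ] (M ⊗[ℂ] M),
      TensorProduct.map (cL ν α) LinearMap.id
        ((TensorProduct.assoc ℂ M M M).symm y)
      = LinearMap.lTensor M (cR ν α) y := by
    intro y
    induction y using TensorProduct.induction_on with
    | zero => simp
    | tmul b z =>
      induction z using TensorProduct.induction_on with
      | zero => rw [tmul_zero, map_zero, map_zero, map_zero]
      | tmul c d =>
        rw [assoc_symm_tmul, map_tmul, cL_tmul, LinearMap.lTensor_tmul, cR_tmul]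
        simp only [LinearMap.id_coe, id_eq, smul_tmul]
      | add u v hu hv => rw [tmul_add, map_add, map_add, hu, hv, map_add]
    | add u v hu hv => simp [hu, hv]
  rw [h1]
  have h2 : ∀ w : M ⊗[ℂ] M,
      LinearMap.lTensor M (cR ν α)
        (LinearMap.lTensor M (Coalgebra.comul (R := ℂ)) w)
      = LinearMap.lTensor M (pp ν α) w := by
    intro w
    induction w using TensorProduct.induction_on with
    | zero => simp
    | tmul b c => simp [pp]
    | add u v hu hv => simp [hu, hv]
  exact h2 _

end aux

/-- For a symmetric `ν̄` the two coalgebra compatibility identities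
`(id ⊗ Δ) ∘ ν̄ = (ν̄ ⊗ id) ∘ (id ⊗ Δ)` and `(Δ ⊗ id) ∘ ν̄ = (id ⊗ ν̄) ∘ τ₁₂ ∘ (id ⊗ Δ)`
hold (with the evident associators inserted). -/
theorem stmt15 {M : Type*} [AddCommGroup M] [Module ℂ M] [Coalgebra ℂ M]
    (ν : M →ₗ[ℂ] M →ₗ[ℂ] ℂ)
    (G : M ⊗[ℂ] ((M ⊗[ℂ] M) ⊗[ℂ] M) →ₗ[ℂ] M ⊗[ℂ] M)
    (hG : ∀ a b1 b2 b3 : M,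
      G (a ⊗ₜ[ℂ] ((b1 ⊗ₜ[ℂ] b2) ⊗ₜ[ℂ] b3)) = ν a b2 • (b1 ⊗ₜ[ℂ] b3))
    (nubar : M ⊗[ℂ] M →ₗ[ℂ] M ⊗[ℂ] M)
    (hnubar : ∀ α β : M, nubar (α ⊗ₜ[ℂ] β) =
      G (α ⊗ₜ[ℂ] (LinearMap.rTensor M (Coalgebra.comul (R := ℂ))
        (Coalgebra.comul (R := ℂ) β))))
    (hsym : ∀ α β : M, nubar (α ⊗ₜ[ℂ] β) = nubar (β ⊗ₜ[ℂ] α))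
    (t12 : M ⊗[ℂ] (M ⊗[ℂ] M) →ₗ[ℂ] M ⊗[ℂ] (M ⊗[ℂ] M))
    (ht12 : ∀ a b c : M, t12 (a ⊗ₜ[ℂ] (b ⊗ₜ[ℂ] c)) = b ⊗ₜ[ℂ] (a ⊗ₜ[ℂ] c)) :
    (LinearMap.lTensor M (Coalgebra.comul (R := ℂ)) ∘ₗ nubar =
      (TensorProduct.assoc ℂ M M M).toLinearMap ∘ₗ
        LinearMap.rTensor M nubar ∘ₗ
        (TensorProduct.assoc ℂ M M M).symm.toLinearMap ∘ₗ
        LinearMap.lTensor M (Coalgebra.comul (R := ℂ))) ∧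
    ((TensorProduct.assoc ℂ M M M).toLinearMap ∘ₗ
        LinearMap.rTensor M (Coalgebra.comul (R := ℂ)) ∘ₗ nubar =
      LinearMap.lTensor M nubar ∘ₗ t12 ∘ₗ
        LinearMap.lTensor M (Coalgebra.comul (R := ℂ))) := by
  constructor
  · apply TensorProduct.ext'
    intro α β
    simp only [LinearMap.comp_apply, LinearEquiv.coe_coe, LinearMap.lTensor_tmul]
    rw [L1 ν G hG nubar hnubar]
    have E1 : ∀ x : M ⊗[ℂ] M,
        (TensorProduct.assoc ℂ M M M)
          (LinearMap.rTensor M nubar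
            ((TensorProduct.assoc ℂ M M M).symm (α ⊗ₜ[ℂ] x)))
        = LinearMap.rTensor (M ⊗[ℂ] M) (qq ν α)
            ((TensorProduct.assoc ℂ M M M)
              (LinearMap.rTensor M (Coalgebra.comul (R := ℂ)) x)) := by
      intro x
      induction x using TensorProduct.induction_on with
      | zero => simp
      | tmul b c =>
        simp only [assoc_symm_tmul, LinearMap.rTensor_tmul]
        rw [L1 ν G hG nubar hnubar]
        generalize Coalgebra.comul (R := ℂ) b = y
        induction y using TensorProduct.induction_on with
        | zero => simp
        | tmul b1 b2 => simp
        | add u v hu hv => simp [add_tmul, hu, hv]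
      | add u v hu hv => simp [tmul_add, hu, hv]
    rw [E1, Coalgebra.coassoc_apply]
    generalize Coalgebra.comul (R := ℂ) β = w
    induction w using TensorProduct.induction_on with
    | zero => simp
    | tmul b c => simp
    | add u v hu hv => simp [hu, hv]
  · apply TensorProduct.ext'
    intro α β
    simp only [LinearMap.comp_apply, LinearEquiv.coe_coe, LinearMap.lTensor_tmul]
    rw [L2 ν G hG nubar hnubar]
    have E2 : ∀ x : M ⊗[ℂ] M,
        LinearMap.lTensor M nubar (t12 (α ⊗ₜ[ℂ] x))
        = LinearMap.lTensor M (nubar ∘ₗ TensorProduct.mk ℂ M M α) x := by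
      intro x
      induction x using TensorProduct.induction_on with
      | zero => simp
      | tmul b c => simp [ht12]
      | add u v hu hv => rw [tmul_add, map_add, map_add, hu, hv, map_add]
    rw [E2]
    have E3 : ∀ w : M ⊗[ℂ] M,
        (TensorProduct.assoc ℂ M M M)
          (LinearMap.rTensor M (Coalgebra.comul (R := ℂ))
            (LinearMap.lTensor M (pp ν α) w))
        = LinearMap.lTensor M (LinearMap.lTensor M (pp ν α))
            ((TensorProduct.assoc ℂ M M M)
              (LinearMap.rTensor M (Coalgebra.comul (R := ℂ)) w)) := by
      intro w
      induction w using TensorProduct.induction_on with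
      | zero => simp
      | tmul b c =>
        simp only [LinearMap.lTensor_tmul, LinearMap.rTensor_tmul]
        generalize Coalgebra.comul (R := ℂ) b = y
        induction y using TensorProduct.induction_on with
        | zero => simp
        | tmul b1 b2 => simp
        | add u v hu hv => simp [add_tmul, hu, hv]
      | add u v hu hv => simp [hu, hv]
    rw [E3, Coalgebra.coassoc_apply]
    generalize Coalgebra.comul (R := ℂ) β = w
    induction w using TensorProduct.induction_on with
    | zero => simp
    | tmul b c =>
      simp only [LinearMap.lTensor_tmul, LinearMap.coe_comp, Function.comp_apply,
        mk_apply]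
      rw [← L2 ν G hG nubar hnubar]
    | add u v hu hv => simp only [map_add, hu, hv]
end

section
/- Assume in addition that db is a modified double Poisson bracket on A (i.e. {a,{b,c}} − {b,{a,c}} = {{a,b},c} for all a,b,c ∈ A and {a,b} + {b,a} ∈ [A,A] for all a,b ∈ A, where {a,b} = μ(db(a ⊗ b)) and [A,A] is the ℂ-linear span of commutators). Then for all a,b,c ∈ A and all α ∈ M, the restriction of P to trace elements satisfies the Jacobi identity for a left Loday bracket: P(a_τ, P(b_τ, c_α)) − P(b_τ, P(a_τ, c_α)) = P(P(a_τ, b_τ), c_α). -/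
open TensorProduct

/-- If `db` is moreover a modified double Poisson bracket, then the
bracket `P` on the representation algebra restricted to trace elements satisfies
the Jacobi identity for a left Loday bracket. -/
theorem stmt17 {A M B : Type*} [Ring A] [Algebra ℂ A]
    [AddCommGroup M] [Module ℂ M] [Coalgebra ℂ M]
    [CommRing B] [Algebra ℂ B]
    (db : A ⊗[ℂ] A →ₗ[ℂ] A ⊗[ℂ] A)
    (hLeibR : ∀ a b c : A, db (a ⊗ₜ[ℂ] (b * c)) =
      (b ⊗ₜ[ℂ] (1 : A)) * db (a ⊗ₜ[ℂ] c) + db (a ⊗ₜ[ℂ] b) * ((1 : A) ⊗ₜ[ℂ] c))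
    (hLeibL : ∀ a b c : A, db ((a * b) ⊗ₜ[ℂ] c) =
      ((1 : A) ⊗ₜ[ℂ] a) * db (b ⊗ₜ[ℂ] c) + db (a ⊗ₜ[ℂ] c) * (b ⊗ₜ[ℂ] (1 : A)))
    (ν : M →ₗ[ℂ] M →ₗ[ℂ] ℂ) (τ : M)
    (hτ : ∀ β : M, ν τ β = Coalgebra.counit (R := ℂ) β)
    (ρ : A →ₗ[ℂ] M →ₗ[ℂ] B)
    (hρmul : ∀ (x y : A) (α : M), ρ (x * y) α =
      LinearMap.mul' ℂ B (TensorProduct.map (ρ x) (ρ y) (Coalgebra.comul (R := ℂ) α)))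
    (K : M → ((A ⊗[ℂ] A) ⊗[ℂ] ((M ⊗[ℂ] M) ⊗[ℂ] M) →ₗ[ℂ] B))
    (hK : ∀ (α : M) (s t : A) (b1 b2 b3 : M),
      K α ((s ⊗ₜ[ℂ] t) ⊗ₜ[ℂ] ((b1 ⊗ₜ[ℂ] b2) ⊗ₜ[ℂ] b3)) = ν α b2 • (ρ s b1 * ρ t b3))
    (P : B →ₗ[ℂ] B →ₗ[ℂ] B)
    (hP : ∀ (a b : A) (α β : M),
      P (ρ a α) (ρ b β) =
        K α (db (a ⊗ₜ[ℂ] b) ⊗ₜ[ℂ]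
          LinearMap.rTensor M (Coalgebra.comul (R := ℂ)) (Coalgebra.comul (R := ℂ) β)))
    (hJac : ∀ a b c : A,
      LinearMap.mul' ℂ A (db (a ⊗ₜ[ℂ] LinearMap.mul' ℂ A (db (b ⊗ₜ[ℂ] c)))) -
      LinearMap.mul' ℂ A (db (b ⊗ₜ[ℂ] LinearMap.mul' ℂ A (db (a ⊗ₜ[ℂ] c)))) =
      LinearMap.mul' ℂ A (db (LinearMap.mul' ℂ A (db (a ⊗ₜ[ℂ] b)) ⊗ₜ[ℂ] c)))
    (hSkew : ∀ a b : A,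
      LinearMap.mul' ℂ A (db (a ⊗ₜ[ℂ] b)) + LinearMap.mul' ℂ A (db (b ⊗ₜ[ℂ] a)) ∈
      Submodule.span ℂ {z : A | ∃ x y : A, z = x * y - y * x}) :
    ∀ (a b c : A) (α : M),
      P (ρ a τ) (P (ρ b τ) (ρ c α)) - P (ρ b τ) (P (ρ a τ) (ρ c α)) =
        P (P (ρ a τ) (ρ b τ)) (ρ c α) := by
  -- contraction of the second tensor factor by the counit
  set contract : M ⊗[ℂ] M →ₗ[ℂ] M :=
    (TensorProduct.rid ℂ M).toLinearMap ∘ₗ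
      LinearMap.lTensor M (Coalgebra.counit (R := ℂ)) with hcdef
  have hcontract : ∀ β : M, contract (Coalgebra.comul (R := ℂ) β) = β := by
    intro β
    simp [hcdef]
  -- step 1: evaluate K τ on (s ⊗ t) ⊗ (v ⊗ b3) for arbitrary v : M ⊗ M
  have h1 : ∀ (s t : A) (b3 : M) (v : M ⊗[ℂ] M),
      K τ ((s ⊗ₜ[ℂ] t) ⊗ₜ[ℂ] (v ⊗ₜ[ℂ] b3)) = ρ s (contract v) * ρ t b3 := by
    intro s t b3 v
    induction v using TensorProduct.induction_on with
    | zero => simp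
    | tmul c1 c2 =>
        rw [hK, hτ]
        simp [hcdef, smul_mul_assoc]
    | add x y hx hy =>
        rw [TensorProduct.add_tmul, TensorProduct.tmul_add, map_add, hx, hy,
          map_add, map_add, add_mul]
  -- step 2: evaluate K τ on (s ⊗ t) ⊗ rTensor comul w for arbitrary w : M ⊗ M
  have h2 : ∀ (s t : A) (w : M ⊗[ℂ] M),
      K τ ((s ⊗ₜ[ℂ] t) ⊗ₜ[ℂ] LinearMap.rTensor M (Coalgebra.comul (R := ℂ)) w) =
        LinearMap.mul' ℂ B (TensorProduct.map (ρ s) (ρ t) w) := by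
    intro s t w
    induction w using TensorProduct.induction_on with
    | zero => simp
    | tmul b1 b3 =>
        rw [LinearMap.rTensor_tmul, h1, hcontract]
        simp
    | add x y hx hy =>
        rw [map_add, TensorProduct.tmul_add, map_add, hx, hy, map_add, map_add]
  -- step 3: full key identity for arbitrary u : A ⊗ A
  have h3 : ∀ (u : A ⊗[ℂ] A) (β : M),
      K τ (u ⊗ₜ[ℂ] LinearMap.rTensor M (Coalgebra.comul (R := ℂ))
          (Coalgebra.comul (R := ℂ) β)) = ρ (LinearMap.mul' ℂ A u) β := by
    intro u β
    induction u using TensorProduct.induction_on with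
    | zero => simp
    | tmul s t =>
        rw [h2, LinearMap.mul'_apply, hρmul]
    | add x y hx hy =>
        rw [TensorProduct.add_tmul, map_add, hx, hy, map_add, map_add,
          LinearMap.add_apply]
  -- key: P on trace elements is ρ of the bracket
  have hkey : ∀ (x y : A) (β : M),
      P (ρ x τ) (ρ y β) = ρ (LinearMap.mul' ℂ A (db (x ⊗ₜ[ℂ] y))) β := by
    intro x y β
    rw [hP x y τ β, h3]
  intro a b c α
  rw [hkey b c α, hkey a (LinearMap.mul' ℂ A (db (b ⊗ₜ[ℂ] c))) α,
    hkey a c α, hkey b (LinearMap.mul' ℂ A (db (a ⊗ₜ[ℂ] c))) α,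
    hkey a b τ, hkey (LinearMap.mul' ℂ A (db (a ⊗ₜ[ℂ] b))) c α,
    ← hJac a b c, map_sub, LinearMap.sub_apply]
end

section
/- Let db be a double bracket on A and define D₁ := R₁₂ ∘ R₂₃ − R₂₃ ∘ R₁₃ − R₁₃ ∘ R₁₂ : A⊗A⊗A → A⊗A⊗A. Then for all a₁, a₂, b, c ∈ A: D₁((a₁a₂) ⊗ b ⊗ c) − (1 ⊗ a₁ ⊗ 1)·D₁(a₂ ⊗ b ⊗ c) − D₁(a₁ ⊗ b ⊗ c)·(a₂ ⊗ 1 ⊗ 1) = −Ψ₁(db(a₂ ⊗ c) ⊗ db(b ⊗ a₁)) − Ψ₂(db(a₂ ⊗ c) ⊗ db(a₁ ⊗ b)), where Ψ₁, Ψ₂ : (A⊗A)⊗(A⊗A) → A⊗A⊗A are the linear maps Ψ₁((s⊗t)⊗(x⊗y)) = s ⊗ x ⊗ (y·t) and Ψ₂((s⊗t)⊗(x⊗y)) = s ⊗ y ⊗ (x·t), and products in A⊗A⊗A are factorwise. (In Sweedler notation, the right-hand side is −db(a₂,c)′ ⊗ db(b,a₁)′ ⊗ db(b,a₁)″db(a₂,c)″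 − db(a₂,c)′ ⊗ db(a₁,b)″ ⊗ db(a₁,b)′db(a₂,c)″.) -/
open TensorProduct

/-- The defect of `D₁ = R₁₂R₂₃ − R₂₃R₁₃ − R₁₃R₁₂` being a derivation
in its first argument is given by the explicit formula of equation (25). -/
theorem stmt18 {A : Type*} [Ring A] [Algebra ℂ A]
    (db : A ⊗[ℂ] A →ₗ[ℂ] A ⊗[ℂ] A)
    (hLeibR : ∀ a b c : A, db (a ⊗ₜ[ℂ] (b * c)) =
      (b ⊗ₜ[ℂ] (1 : A)) * db (a ⊗ₜ[ℂ] c) + db (a ⊗ₜ[ℂ] b) * ((1 : A) ⊗ₜ[ℂ] c))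
    (hLeibL : ∀ a b c : A, db ((a * b) ⊗ₜ[ℂ] c) =
      ((1 : A) ⊗ₜ[ℂ] a) * db (b ⊗ₜ[ℂ] c) + db (a ⊗ₜ[ℂ] c) * (b ⊗ₜ[ℂ] (1 : A)))
    (J23 J13 : (A ⊗[ℂ] A) ⊗[ℂ] A →ₗ[ℂ] (A ⊗[ℂ] A) ⊗[ℂ] A)
    (hJ23 : ∀ x y a : A, J23 ((x ⊗ₜ[ℂ] y) ⊗ₜ[ℂ] a) = (a ⊗ₜ[ℂ] x) ⊗ₜ[ℂ] y)
    (hJ13 : ∀ x y b : A, J13 ((x ⊗ₜ[ℂ] y) ⊗ₜ[ℂ] b) = (x ⊗ₜ[ℂ] b) ⊗ₜ[ℂ] y)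
    (R12 R23 R13 : (A ⊗[ℂ] A) ⊗[ℂ] A →ₗ[ℂ] (A ⊗[ℂ] A) ⊗[ℂ] A)
    (hR12 : ∀ a b c : A, R12 ((a ⊗ₜ[ℂ] b) ⊗ₜ[ℂ] c) = db (a ⊗ₜ[ℂ] b) ⊗ₜ[ℂ] c)
    (hR23 : ∀ a b c : A, R23 ((a ⊗ₜ[ℂ] b) ⊗ₜ[ℂ] c) = J23 (db (b ⊗ₜ[ℂ] c) ⊗ₜ[ℂ] a))
    (hR13 : ∀ a b c : A, R13 ((a ⊗ₜ[ℂ] b) ⊗ₜ[ℂ] c) = J13 (db (a ⊗ₜ[ℂ] c) ⊗ₜ[ℂ] b))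
    (D1 : (A ⊗[ℂ] A) ⊗[ℂ] A →ₗ[ℂ] (A ⊗[ℂ] A) ⊗[ℂ] A)
    (hD1 : D1 = R12 ∘ₗ R23 - R23 ∘ₗ R13 - R13 ∘ₗ R12)
    (Ψ₁ Ψ₂ : (A ⊗[ℂ] A) ⊗[ℂ] (A ⊗[ℂ] A) →ₗ[ℂ] (A ⊗[ℂ] A) ⊗[ℂ] A)
    (hΨ₁ : ∀ s t x y : A,
      Ψ₁ ((s ⊗ₜ[ℂ] t) ⊗ₜ[ℂ] (x ⊗ₜ[ℂ] y)) = (s ⊗ₜ[ℂ] x) ⊗ₜ[ℂ] (y * t))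
    (hΨ₂ : ∀ s t x y : A,
      Ψ₂ ((s ⊗ₜ[ℂ] t) ⊗ₜ[ℂ] (x ⊗ₜ[ℂ] y)) = (s ⊗ₜ[ℂ] y) ⊗ₜ[ℂ] (x * t)) :
    ∀ a1 a2 b c : A,
      D1 (((a1 * a2) ⊗ₜ[ℂ] b) ⊗ₜ[ℂ] c)
        - (((1 : A) ⊗ₜ[ℂ] a1) ⊗ₜ[ℂ] (1 : A)) * D1 ((a2 ⊗ₜ[ℂ] b) ⊗ₜ[ℂ] c)
        - D1 ((a1 ⊗ₜ[ℂ] b) ⊗ₜ[ℂ] c) * ((a2 ⊗ₜ[ℂ] (1 : A)) ⊗ₜ[ℂ] (1 : A)) =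
      - Ψ₁ (db (a2 ⊗ₜ[ℂ] c) ⊗ₜ[ℂ] db (b ⊗ₜ[ℂ] a1))
        - Ψ₂ (db (a2 ⊗ₜ[ℂ] c) ⊗ₜ[ℂ] db (a1 ⊗ₜ[ℂ] b)) := by
  intro a1 a2 b c
  have tm : ∀ (u m : A ⊗[ℂ] A) (z y : A),
      (u ⊗ₜ[ℂ] z) * (m ⊗ₜ[ℂ] y) = (u * m) ⊗ₜ[ℂ] (z * y) := fun u m z y =>
    Algebra.TensorProduct.tmul_mul_tmul u m z y
  have tmA : ∀ (u m z y : A),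
      (u ⊗ₜ[ℂ] z) * (m ⊗ₜ[ℂ] y) = (u * m) ⊗ₜ[ℂ] (z * y) := fun u m z y =>
    Algebra.TensorProduct.tmul_mul_tmul u m z y
  have subB : ∀ (v : A ⊗[ℂ] A) (p : A),
      J23 (((a1 ⊗ₜ[ℂ] (1:A)) * v) ⊗ₜ[ℂ] p)
        = (((1:A) ⊗ₜ[ℂ] a1) ⊗ₜ[ℂ] (1:A)) * J23 (v ⊗ₜ[ℂ] p) := by
    intro v p
    induction v using TensorProduct.induction_on with
    | zero => simp
    | tmul x y => simp [tm, hJ23]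
    | add u v hu hv => simp [mul_add, add_tmul, hu, hv]
  have subC : ∀ (v : A ⊗[ℂ] A) (p q : A),
      J23 ((v * ((1:A) ⊗ₜ[ℂ] q)) ⊗ₜ[ℂ] p) = Ψ₁ ((p ⊗ₜ[ℂ] q) ⊗ₜ[ℂ] v) := by
    intro v p q
    induction v using TensorProduct.induction_on with
    | zero => simp
    | tmul x y => simp [tm, hJ23, hΨ₁]
    | add u v hu hv => simp [add_mul, add_tmul, tmul_add, hu, hv]
  have subE : ∀ (v : A ⊗[ℂ] A) (p : A),
      J23 (v ⊗ₜ[ℂ] (p * a2)) = J23 (v ⊗ₜ[ℂ] p) * ((a2 ⊗ₜ[ℂ] (1:A)) ⊗ₜ[ℂ] (1:A)) := by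
    intro v p
    induction v using TensorProduct.induction_on with
    | zero => simp
    | tmul x y => simp [tm, hJ23]
    | add u v hu hv => simp [add_mul, add_tmul, hu, hv]
  have subF : ∀ (v : A ⊗[ℂ] A) (t : A),
      J13 (v ⊗ₜ[ℂ] (a1 * t)) = (((1:A) ⊗ₜ[ℂ] a1) ⊗ₜ[ℂ] (1:A)) * J13 (v ⊗ₜ[ℂ] t) := by
    intro v t
    induction v using TensorProduct.induction_on with
    | zero => simp
    | tmul x y => simp [tm, hJ13]
    | add u v hu hv => simp [mul_add, add_tmul, hu, hv]
  have subG2 : ∀ (v : A ⊗[ℂ] A) (y : A),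
      J13 ((v * (a2 ⊗ₜ[ℂ] (1:A))) ⊗ₜ[ℂ] y)
        = J13 (v ⊗ₜ[ℂ] y) * ((a2 ⊗ₜ[ℂ] (1:A)) ⊗ₜ[ℂ] (1:A)) := by
    intro v y
    induction v using TensorProduct.induction_on with
    | zero => simp
    | tmul u w => simp [tm, hJ13]
    | add u v hu hv => simp [add_mul, add_tmul, hu, hv]
  have subG1 : ∀ (P : A ⊗[ℂ] A) (x y : A),
      J13 ((((1:A) ⊗ₜ[ℂ] x) * P) ⊗ₜ[ℂ] y) = Ψ₂ (P ⊗ₜ[ℂ] (x ⊗ₜ[ℂ] y)) := by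
    intro P x y
    induction P using TensorProduct.induction_on with
    | zero => simp
    | tmul p q => simp [tm, hJ13, hΨ₂]
    | add u v hu hv => simp [mul_add, add_tmul, add_tmul, hu, hv]
  have key1 : ∀ w : A ⊗[ℂ] A,
      R12 (J23 (w ⊗ₜ[ℂ] (a1 * a2)))
        = (((1:A) ⊗ₜ[ℂ] a1) ⊗ₜ[ℂ] (1:A)) * R12 (J23 (w ⊗ₜ[ℂ] a2))
          + R12 (J23 (w ⊗ₜ[ℂ] a1)) * ((a2 ⊗ₜ[ℂ] (1:A)) ⊗ₜ[ℂ] (1:A)) := by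
    intro w
    induction w using TensorProduct.induction_on with
    | zero => simp
    | tmul x y =>
        rw [hJ23, hJ23, hJ23, hR12, hR12, hR12, hLeibL, add_tmul, tm, tm]
        simp
    | add u v hu hv =>
        simp only [add_tmul, map_add, mul_add, add_mul, hu, hv]
        abel
  have key2 : ∀ m : A ⊗[ℂ] A,
      R23 (J13 ((((1:A) ⊗ₜ[ℂ] a1) * m) ⊗ₜ[ℂ] b))
        = (((1:A) ⊗ₜ[ℂ] a1) ⊗ₜ[ℂ] (1:A)) * R23 (J13 (m ⊗ₜ[ℂ] b))
          + Ψ₁ (m ⊗ₜ[ℂ] db (b ⊗ₜ[ℂ] a1)) := by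
    intro m
    induction m using TensorProduct.induction_on with
    | zero => simp
    | tmul p q =>
        rw [tmA, one_mul, hJ13, hR23, hLeibR, add_tmul, map_add, subB, subC,
          hJ13, hR23]
    | add u v hu hv =>
        simp only [mul_add, add_tmul, map_add, add_mul, hu, hv]
        abel
  have key2b : ∀ m : A ⊗[ℂ] A,
      R23 (J13 ((m * (a2 ⊗ₜ[ℂ] (1:A))) ⊗ₜ[ℂ] b))
        = R23 (J13 (m ⊗ₜ[ℂ] b)) * ((a2 ⊗ₜ[ℂ] (1:A)) ⊗ₜ[ℂ] (1:A)) := by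
    intro m
    induction m using TensorProduct.induction_on with
    | zero => simp
    | tmul p q =>
        rw [tmA, mul_one, hJ13, hR23, subE, hJ13, hR23]
    | add u v hu hv =>
        simp only [add_mul, add_tmul, map_add, hu, hv]
  have key3a : ∀ m : A ⊗[ℂ] A,
      R13 ((((1:A) ⊗ₜ[ℂ] a1) * m) ⊗ₜ[ℂ] c)
        = (((1:A) ⊗ₜ[ℂ] a1) ⊗ₜ[ℂ] (1:A)) * R13 (m ⊗ₜ[ℂ] c) := by
    intro m
    induction m using TensorProduct.induction_on with
    | zero => simp
    | tmul s t =>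
        rw [tmA, one_mul, hR13, hR13, subF]
    | add u v hu hv =>
        simp only [mul_add, add_tmul, map_add, hu, hv]
  have key3b : ∀ m : A ⊗[ℂ] A,
      R13 ((m * (a2 ⊗ₜ[ℂ] (1:A))) ⊗ₜ[ℂ] c)
        = R13 (m ⊗ₜ[ℂ] c) * ((a2 ⊗ₜ[ℂ] (1:A)) ⊗ₜ[ℂ] (1:A))
          + Ψ₂ (db (a2 ⊗ₜ[ℂ] c) ⊗ₜ[ℂ] m) := by
    intro m
    induction m using TensorProduct.induction_on with
    | zero => simp
    | tmul x y =>
        rw [tmA, mul_one, hR13, hLeibL, add_tmul, map_add, subG1, subG2, hR13]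
        rw [add_comm]
    | add u v hu hv =>
        simp only [add_mul, add_tmul, map_add, tmul_add, hu, hv]
        abel
  have hD : ∀ x, D1 x = R12 (R23 x) - R23 (R13 x) - R13 (R12 x) := by
    intro x; rw [hD1]; rfl
  rw [hD, hD, hD,
    hR23 (a1 * a2) b c, hR23 a2 b c, hR23 a1 b c,
    hR13 (a1 * a2) b c, hR13 a2 b c, hR13 a1 b c,
    hR12 (a1 * a2) b c, hR12 a2 b c, hR12 a1 b c,
    hLeibL a1 a2 c, hLeibL a1 a2 b, add_tmul, add_tmul, map_add, map_add,
    map_add, key1, key2, key2b, key3a, key3b]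
  simp only [mul_sub, sub_mul]
  abel
end

section
/- Let db be a double bracket on A, set {a,b} := μ(db(a ⊗ b)), and define D₁ := R₁₂ ∘ R₂₃ − R₂₃ ∘ R₁₃ − R₁₃ ∘ R₁₂ and D₂ := σ₁₂ ∘ (R₁₃ ∘ R₂₃ − R₂₁ ∘ R₁₃ − R₂₃ ∘ R₁₂), where σ₁₂ : A⊗A⊗A → A⊗A⊗A swaps the first two tensor factors. Then for all H₁, H₂, x ∈ A: {H₁, {H₂, x}} − {H₂, {H₁, x}} − {{H₁, H₂}, x} = μ₃((D₁ + D₂)(H₁ ⊗ H₂ ⊗ x)), where μ₃ : A⊗A⊗A → A is the triple multiplication map a⊗b⊗c ↦ abc. In particular, the Jacobi identity {H₁,{H₂,x}} − {H₂,{H₁,x}} = {{H₁,H₂},x} holds for all H₁,H₂,x if and only if μ₃ ∘ (D₁ + D₂) = 0. -/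
open TensorProduct

/-- The Jacobi defect of the Loday bracket `{a,b} = μ(db(a⊗b))`
equals `μ₃ ∘ (D₁ + D₂)`, so the Jacobi identity holds iff `μ₃ ∘ (D₁ + D₂) = 0`. -/
theorem stmt19 {A : Type*} [Ring A] [Algebra ℂ A]
    (db : A ⊗[ℂ] A →ₗ[ℂ] A ⊗[ℂ] A)
    (hLeibR : ∀ a b c : A, db (a ⊗ₜ[ℂ] (b * c)) =
      (b ⊗ₜ[ℂ] (1 : A)) * db (a ⊗ₜ[ℂ] c) + db (a ⊗ₜ[ℂ] b) * ((1 : A) ⊗ₜ[ℂ] c))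
    (hLeibL : ∀ a b c : A, db ((a * b) ⊗ₜ[ℂ] c) =
      ((1 : A) ⊗ₜ[ℂ] a) * db (b ⊗ₜ[ℂ] c) + db (a ⊗ₜ[ℂ] c) * (b ⊗ₜ[ℂ] (1 : A)))
    (br : A → A → A)
    (hbr : ∀ a b : A, br a b = LinearMap.mul' ℂ A (db (a ⊗ₜ[ℂ] b)))
    (J23 J13 J21 : (A ⊗[ℂ] A) ⊗[ℂ] A →ₗ[ℂ] (A ⊗[ℂ] A) ⊗[ℂ] A)
    (hJ23 : ∀ x y a : A, J23 ((x ⊗ₜ[ℂ] y) ⊗ₜ[ℂ] a) = (a ⊗ₜ[ℂ] x) ⊗ₜ[ℂ] y)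
    (hJ13 : ∀ x y b : A, J13 ((x ⊗ₜ[ℂ] y) ⊗ₜ[ℂ] b) = (x ⊗ₜ[ℂ] b) ⊗ₜ[ℂ] y)
    (hJ21 : ∀ x y c : A, J21 ((x ⊗ₜ[ℂ] y) ⊗ₜ[ℂ] c) = (y ⊗ₜ[ℂ] x) ⊗ₜ[ℂ] c)
    (R12 R23 R13 R21 : (A ⊗[ℂ] A) ⊗[ℂ] A →ₗ[ℂ] (A ⊗[ℂ] A) ⊗[ℂ] A)
    (hR12 : ∀ a b c : A, R12 ((a ⊗ₜ[ℂ] b) ⊗ₜ[ℂ] c) = db (a ⊗ₜ[ℂ] b) ⊗ₜ[ℂ] c)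
    (hR23 : ∀ a b c : A, R23 ((a ⊗ₜ[ℂ] b) ⊗ₜ[ℂ] c) = J23 (db (b ⊗ₜ[ℂ] c) ⊗ₜ[ℂ] a))
    (hR13 : ∀ a b c : A, R13 ((a ⊗ₜ[ℂ] b) ⊗ₜ[ℂ] c) = J13 (db (a ⊗ₜ[ℂ] c) ⊗ₜ[ℂ] b))
    (hR21 : ∀ a b c : A, R21 ((a ⊗ₜ[ℂ] b) ⊗ₜ[ℂ] c) = J21 (db (b ⊗ₜ[ℂ] a) ⊗ₜ[ℂ] c))
    (s12 : (A ⊗[ℂ] A) ⊗[ℂ] A →ₗ[ℂ] (A ⊗[ℂ] A) ⊗[ℂ] A)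
    (hs12 : ∀ a b c : A, s12 ((a ⊗ₜ[ℂ] b) ⊗ₜ[ℂ] c) = (b ⊗ₜ[ℂ] a) ⊗ₜ[ℂ] c)
    (D1 D2 : (A ⊗[ℂ] A) ⊗[ℂ] A →ₗ[ℂ] (A ⊗[ℂ] A) ⊗[ℂ] A)
    (hD1 : D1 = R12 ∘ₗ R23 - R23 ∘ₗ R13 - R13 ∘ₗ R12)
    (hD2 : D2 = s12 ∘ₗ (R13 ∘ₗ R23 - R21 ∘ₗ R13 - R23 ∘ₗ R12))
    (μ3 : (A ⊗[ℂ] A) ⊗[ℂ] A →ₗ[ℂ] A)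
    (hμ3 : ∀ a b c : A, μ3 ((a ⊗ₜ[ℂ] b) ⊗ₜ[ℂ] c) = a * b * c) :
    (∀ H1 H2 x : A,
      br H1 (br H2 x) - br H2 (br H1 x) - br (br H1 H2) x =
        μ3 ((D1 + D2) ((H1 ⊗ₜ[ℂ] H2) ⊗ₜ[ℂ] x))) ∧
    ((∀ H1 H2 x : A,
        br H1 (br H2 x) - br H2 (br H1 x) = br (br H1 H2) x) ↔
      μ3 ∘ₗ (D1 + D2) = 0) := by
  
  have hA : ∀ (w : A ⊗[ℂ] A) (c : A), μ3 (w ⊗ₜ[ℂ] c) = LinearMap.mul' ℂ A w * c := by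
    intro w c
    induction w using TensorProduct.induction_on with
    | zero => simp
    | tmul a b => simp [hμ3, LinearMap.mul'_apply]
    | add u v hu hv => simp [TensorProduct.add_tmul, map_add, hu, hv, add_mul]
  have hB : ∀ (w : A ⊗[ℂ] A) (c : A), μ3 (J23 (w ⊗ₜ[ℂ] c)) = c * LinearMap.mul' ℂ A w := by
    intro w c
    induction w using TensorProduct.induction_on with
    | zero => simp
    | tmul a b => simp [hJ23, hμ3, LinearMap.mul'_apply, mul_assoc]
    | add u v hu hv => simp [TensorProduct.add_tmul, map_add, hu, hv, mul_add]
  have hC : ∀ (w : A ⊗[ℂ] A) (c : A), μ3 (s12 (J13 (w ⊗ₜ[ℂ] c))) = c * LinearMap.mul' ℂ A w := by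
    intro w c
    induction w using TensorProduct.induction_on with
    | zero => simp
    | tmul a b => simp [hJ13, hs12, hμ3, LinearMap.mul'_apply, mul_assoc]
    | add u v hu hv => simp [TensorProduct.add_tmul, map_add, hu, hv, mul_add]
  have hD : ∀ (w : A ⊗[ℂ] A) (c : A), μ3 (s12 (J21 (w ⊗ₜ[ℂ] c))) = LinearMap.mul' ℂ A w * c := by
    intro w c
    induction w using TensorProduct.induction_on with
    | zero => simp
    | tmul a b => simp [hJ21, hs12, hμ3, LinearMap.mul'_apply]
    | add u v hu hv => simp [TensorProduct.add_tmul, map_add, hu, hv, add_mul]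
  have hE : ∀ (w : A ⊗[ℂ] A) (c : A),
      μ3 (s12 (J23 (w ⊗ₜ[ℂ] c))) = LinearMap.mul' ℂ A (((1 : A) ⊗ₜ[ℂ] c) * w) := by
    intro w c
    induction w using TensorProduct.induction_on with
    | zero => simp
    | tmul a b =>
        simp [hJ23, hs12, hμ3, Algebra.TensorProduct.tmul_mul_tmul,
          LinearMap.mul'_apply, mul_assoc]
    | add u v hu hv => simp [TensorProduct.add_tmul, map_add, mul_add, hu, hv]
  have hF : ∀ (w : A ⊗[ℂ] A) (c : A),
      μ3 (J13 (w ⊗ₜ[ℂ] c)) = LinearMap.mul' ℂ A (w * (c ⊗ₜ[ℂ] (1 : A))) := by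
    intro w c
    induction w using TensorProduct.induction_on with
    | zero => simp
    | tmul a b =>
        simp [hJ13, hμ3, Algebra.TensorProduct.tmul_mul_tmul, LinearMap.mul'_apply]
    | add u v hu hv => simp [TensorProduct.add_tmul, map_add, add_mul, hu, hv]
  have hG : ∀ (w : A ⊗[ℂ] A) (c : A),
      LinearMap.mul' ℂ A ((c ⊗ₜ[ℂ] (1 : A)) * w) = c * LinearMap.mul' ℂ A w := by
    intro w c
    induction w using TensorProduct.induction_on with
    | zero => simp
    | tmul a b =>
        simp [Algebra.TensorProduct.tmul_mul_tmul, LinearMap.mul'_apply, mul_assoc]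
    | add u v hu hv => simp [mul_add, map_add, hu, hv]
  have hH : ∀ (w : A ⊗[ℂ] A) (c : A),
      LinearMap.mul' ℂ A (w * ((1 : A) ⊗ₜ[ℂ] c)) = LinearMap.mul' ℂ A w * c := by
    intro w c
    induction w using TensorProduct.induction_on with
    | zero => simp
    | tmul a b =>
        simp [Algebra.TensorProduct.tmul_mul_tmul, LinearMap.mul'_apply, mul_assoc]
    | add u v hu hv => simp [add_mul, map_add, hu, hv, hA]
  -- Main claim 1
  have hC1 : ∀ (H : A) (u : A ⊗[ℂ] A),
      LinearMap.mul' ℂ A (db (H ⊗ₜ[ℂ] LinearMap.mul' ℂ A u)) =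
        μ3 (R12 (J23 (u ⊗ₜ[ℂ] H))) + μ3 (s12 (R13 (J23 (u ⊗ₜ[ℂ] H)))) := by
    intro H u
    induction u using TensorProduct.induction_on with
    | zero => simp
    | tmul p q =>
        rw [LinearMap.mul'_apply, hLeibR, map_add, hG, hH, hJ23, hR12, hR13, hA, hC]
        abel
    | add u v hu hv =>
        simp only [map_add, TensorProduct.tmul_add, TensorProduct.add_tmul, hu, hv]
        abel
  -- Claim 2a / 2b : rewriting the second bracket
  have hC2a : ∀ (H : A) (v : A ⊗[ℂ] A),
      μ3 (R12 (J23 (v ⊗ₜ[ℂ] H))) = μ3 (s12 (R21 (J13 (v ⊗ₜ[ℂ] H)))) := by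
    intro H v
    induction v using TensorProduct.induction_on with
    | zero => simp
    | tmul m n => rw [hJ23, hJ13, hR12, hR21, hA, hD]
    | add u v hu hv =>
        simp only [map_add, TensorProduct.add_tmul, hu, hv]
  have hC2b : ∀ (H : A) (v : A ⊗[ℂ] A),
      μ3 (s12 (R13 (J23 (v ⊗ₜ[ℂ] H)))) = μ3 (R23 (J13 (v ⊗ₜ[ℂ] H))) := by
    intro H v
    induction v using TensorProduct.induction_on with
    | zero => simp
    | tmul m n => rw [hJ23, hJ13, hR13, hR23, hC, hB]
    | add u v hu hv =>
        simp only [map_add, TensorProduct.add_tmul, hu, hv]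
  -- Claim 3
  have hC3 : ∀ (x : A) (w : A ⊗[ℂ] A),
      LinearMap.mul' ℂ A (db (LinearMap.mul' ℂ A w ⊗ₜ[ℂ] x)) =
        μ3 (R13 (w ⊗ₜ[ℂ] x)) + μ3 (s12 (R23 (w ⊗ₜ[ℂ] x))) := by
    intro x w
    induction w using TensorProduct.induction_on with
    | zero => simp
    | tmul p q =>
        rw [LinearMap.mul'_apply, hLeibL, map_add, hR13, hR23, hF, hE]
        abel
    | add u v hu hv =>
        simp only [map_add, TensorProduct.add_tmul, hu, hv]
        abel
  have key : ∀ H1 H2 x : A,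
      br H1 (br H2 x) - br H2 (br H1 x) - br (br H1 H2) x =
        μ3 ((D1 + D2) ((H1 ⊗ₜ[ℂ] H2) ⊗ₜ[ℂ] x)) := by
    intro H1 H2 x
    simp only [hbr]
    rw [hC1 H1 (db (H2 ⊗ₜ[ℂ] x)), hC1 H2 (db (H1 ⊗ₜ[ℂ] x)),
      hC3 x (db (H1 ⊗ₜ[ℂ] H2)),
      hC2a H2 (db (H1 ⊗ₜ[ℂ] x)), hC2b H2 (db (H1 ⊗ₜ[ℂ] x)),
      ← hR23 H1 H2 x, ← hR13 H1 H2 x, ← hR12 H1 H2 x]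
    rw [hD1, hD2]
    simp only [LinearMap.add_apply, LinearMap.sub_apply, LinearMap.comp_apply,
      map_sub, map_add]
    abel
  refine ⟨key, ?_, ?_⟩
  · intro hJac
    apply TensorProduct.ext_threefold
    intro H1 H2 x
    have h := key H1 H2 x
    rw [hJac H1 H2 x, sub_self] at h
    simpa using h.symm
  · intro h0 H1 H2 x
    have h := key H1 H2 x
    rw [show μ3 ((D1 + D2) ((H1 ⊗ₜ[ℂ] H2) ⊗ₜ[ℂ] x)) =
        (μ3 ∘ₗ (D1 + D2)) ((H1 ⊗ₜ[ℂ] H2) ⊗ₜ[ℂ] x) from rfl, h0] at h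
    simp only [LinearMap.zero_apply] at h
    exact sub_eq_zero.mp h
end
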